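/- arXiv:1111.1999 — 7 statements merged into one kernel-verified Lean document; each statement's English description precedes it below -/
import Mathlib

section
/- Let W : ℕ → A be an infinite word and u a nonempty finite word. Then every factor of W of length u.length is a cyclic shift of u if and only if W is purely periodic with the period equal to its prefix of length u.length (i.e., ∀ i, W (i + u.length) = W i) and that prefix is a cyclic shift of u. -/
/-- Extension of a morphism `φ : A → List B` to finite words: `φ†(w) = (w.map φ).flatten`. -/
def applyMorph {A B : Type*} (φ : A → List B) (w : List A) : List B :=
  (w.map φ).flatten

/-- The finite word `v` occurs in the infinite word `W` at starting position `i`. -/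
def OccursAt {A : Type*} (v : List A) (W : ℕ → A) (i : ℕ) : Prop :=
  ∀ (j : ℕ) (hj : j < v.length), W (i + j) = v.get ⟨j, hj⟩

/-- The finite word `v` is a factor of the infinite word `W`. -/
def FactorOf {A : Type*} (v : List A) (W : ℕ → A) : Prop :=
  ∃ i, OccursAt v W i

/-- The finite word `v` is a prefix of the infinite word `W`. -/
def PrefixOf {A : Type*} (v : List A) (W : ℕ → A) : Prop :=
  OccursAt v W 0

/-- `W` is uniformly recurrent. -/
def UniformlyRecurrent {A : Type*} (W : ℕ → A) : Prop :=
  ∀ u, FactorOf u W → ∃ N, ∀ v, FactorOf v W → v.length = N → u <:+: v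

/-- `W` is eventually periodic. -/
def EventuallyPeriodic {A : Type*} (W : ℕ → A) : Prop :=
  ∃ k t : ℕ, 1 ≤ t ∧ ∀ i, k ≤ i → W (i + t) = W i

/-- The substitution `φ` is prolongable over the letter `a₁`. -/
def Prolongable {A : Type*} (φ : A → List A) (a₁ : A) : Prop :=
  ∃ v, φ a₁ = a₁ :: v ∧ ∀ k : ℕ, (applyMorph φ)^[k] v ≠ []

/-- The morphism `φ` is nonerasing. -/
def Nonerasing {A B : Type*} (φ : A → List B) : Prop :=
  ∀ a, φ a ≠ []

/-- `X` is the fixed point `φ^∞(a₁)`: every `φ^n([a₁])` is a prefix of `X`. -/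
def IsFixedPoint {A : Type*} (φ : A → List A) (a₁ : A) (X : ℕ → A) : Prop :=
  ∀ n : ℕ, PrefixOf ((applyMorph φ)^[n] [a₁]) X

/-- `W` is the infinite word `ψ(φ^∞(a₁))`: the words `ψ(φ^n([a₁]))` have unbounded
length and each of them is a prefix of `W`. -/
def IsMorphicWord {A B : Type*} (φ : A → List A) (ψ : A → List B) (a₁ : A)
    (W : ℕ → B) : Prop :=
  (∀ N : ℕ, ∃ k : ℕ, N ≤ (applyMorph ψ ((applyMorph φ)^[k] [a₁])).length) ∧
  ∀ k : ℕ, PrefixOf (applyMorph ψ ((applyMorph φ)^[k] [a₁])) W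

/-- The letter `a` is `φ`-growing: `n ↦ (φ^n [a]).length` is unbounded. -/
def GrowingLetter {A : Type*} (φ : A → List A) (a : A) : Prop :=
  ∀ N : ℕ, ∃ n : ℕ, N ≤ ((applyMorph φ)^[n] [a]).length

/-- The finite word `w` is `φ`-bounded: the sequence `n ↦ φ^n(w)` is eventually periodic. -/
def PhiBounded {A : Type*} (φ : A → List A) (w : List A) : Prop :=
  ∃ n₀ p : ℕ, 1 ≤ p ∧ ∀ n, n₀ ≤ n → (applyMorph φ)^[n + p] w = (applyMorph φ)^[n] w

/-- Letter `a` has growth order `(d, θ)` with respect to `φ`. -/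
def HasGrowthOrder {A : Type*} (φ : A → List A) (a : A) (d : ℕ) (θ : ℝ) : Prop :=
  1 ≤ θ ∧ ∃ c C : ℝ, 0 < c ∧ c ≤ C ∧ ∀ n : ℕ, 1 ≤ n →
    c * (n : ℝ) ^ d * θ ^ n ≤ (((applyMorph φ)^[n] [a]).length : ℝ) ∧
    (((applyMorph φ)^[n] [a]).length : ℝ) ≤ C * (n : ℝ) ^ d * θ ^ n

/-- The substitution `φ` is primitive. -/
def PrimitiveSubst {A : Type*} (φ : A → List A) : Prop :=
  ∃ k : ℕ, 1 ≤ k ∧ ∀ a b : A, b ∈ (applyMorph φ)^[k] [a]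

/-- `v` is a cyclic shift of `u`. -/
def IsCyclicShift {A : Type*} (v u : List A) : Prop :=
  ∃ x y : List A, u = x ++ y ∧ v = y ++ x

/-- `W` is purely periodic with (nonempty) period `u`. -/
def PurelyPeriodicWith {A : Type*} (W : ℕ → A) (u : List A) : Prop :=
  ∃ hu : u ≠ [], ∀ i : ℕ, W i = u.get ⟨i % u.length, Nat.mod_lt i (List.length_pos_iff.mpr hu)⟩

/-- `W` is recurrent: every factor occurs at arbitrarily large starting positions. -/
def RecurrentWord {A : Type*} (W : ℕ → A) : Prop :=
  ∀ u, FactorOf u W → ∀ N : ℕ, ∃ i, N ≤ i ∧ OccursAt u W i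

/-- The letter `a` is recurrent: it occurs in some `φ^k [a]`, `k ≥ 1`. -/
def RecurrentLetter {A : Type*} (φ : A → List A) (a : A) : Prop :=
  ∃ k : ℕ, 1 ≤ k ∧ a ∈ (applyMorph φ)^[k] [a]

lemma isCyclicShift_iff_isRotated {A : Type*} (v u : List A) :
    IsCyclicShift v u ↔ u ~r v := by
  constructor
  · rintro ⟨x, y, rfl, rfl⟩
    exact ⟨x.length, by
      rw [List.rotate_eq_drop_append_take (by simp), List.drop_left, List.take_left]⟩
  · intro h
    obtain ⟨n, hn, rfl⟩ := List.isRotated_iff_mod.mp h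
    exact ⟨u.take n, u.drop n, (List.take_append_drop n u).symm,
      (List.rotate_eq_drop_append_take hn)⟩

/-- all factors of length `|u|` are cyclic shifts of `u` iff the word
is purely periodic with period its prefix of length `|u|`, that prefix being a
cyclic shift of `u`. -/
theorem factors_cyclic_shifts_iff_purely_periodic {A : Type*} (W : ℕ → A)
    (u : List A) (hu : u ≠ []) :
    (∀ v : List A, FactorOf v W → v.length = u.length → IsCyclicShift v u) ↔
    ((∀ i : ℕ, W (i + u.length) = W i) ∧
      IsCyclicShift (List.ofFn fun i : Fin u.length => W i) u) := by
  have npos : 0 < u.length := List.length_pos_iff.mpr hu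
  constructor
  · intro h
    have hcyc : ∀ i : ℕ, IsCyclicShift (List.ofFn fun j : Fin u.length => W (i + j)) u := by
      intro i
      refine h _ ⟨i, ?_⟩ (by simp)
      intro j hj
      simp only [List.length_ofFn] at hj
      simp [List.get_ofFn]
    constructor
    · intro i
      obtain ⟨m, hm⟩ : ∃ m, u.length = m + 1 := ⟨u.length - 1, by omega⟩
      have h1 := ((isCyclicShift_iff_isRotated _ _).mp (hcyc i)).perm
      have h2 := ((isCyclicShift_iff_isRotated _ _).mp (hcyc (i + 1))).perm
      have hperm := h1.symm.trans h2
      have e1 : (List.ofFn fun j : Fin u.length => W (i + j)) =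
          W i :: (List.ofFn fun j : Fin m => W (i + 1 + j)) := by
        apply List.ext_get
        · simp [hm]
        · intro k h1 h2
          cases k with
          | zero => simp [List.get_ofFn]
          | succ k =>
            simp only [List.get_ofFn, List.get_cons_succ]
            simp [List.get_ofFn]
            congr 1
            omega
      have e2 : (List.ofFn fun j : Fin u.length => W (i + 1 + j)) =
          (List.ofFn fun j : Fin m => W (i + 1 + j)) ++ [W (i + u.length)] := by
        apply List.ext_get
        · simp [hm]
        · intro k h1 h2
          simp only [List.length_ofFn, hm] at h1
          rcases lt_or_ge k m with hkm | hkm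
          · simp only [List.get_eq_getElem]; rw [List.getElem_append_left (by simpa using hkm)]
            simp [List.get_ofFn]
          · have hk : k = m := by omega
            simp only [List.get_eq_getElem]
            rw [List.getElem_append_right (by simpa using hkm)]
            simp [List.get_ofFn, hk]
            congr 1
            omega
      rw [e1, e2] at hperm
      have hperm2 : List.Perm (W i :: (List.ofFn fun j : Fin m => W (i + 1 + j)))
          (W (i + u.length) :: (List.ofFn fun j : Fin m => W (i + 1 + j))) :=
        hperm.trans (List.perm_append_singleton _ _)
      have hm2 : (W i ::ₘ (↑(List.ofFn fun j : Fin m => W (i + 1 + j)) : Multiset A)) =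
          W (i + u.length) ::ₘ ↑(List.ofFn fun j : Fin m => W (i + 1 + j)) := by
        exact_mod_cast Quot.sound hperm2
      exact ((Multiset.cons_inj_left _).mp hm2).symm
    · have h0 := hcyc 0
      have : (fun j : Fin u.length => W (0 + j)) = fun j : Fin u.length => W j := by
        funext j; simp
      rwa [this] at h0
  · rintro ⟨hper, hshift⟩
    have hmod : ∀ m : ℕ, W m = W (m % u.length) := by
      intro m
      induction m using Nat.strong_induction_on with
      | _ m ih =>
        rcases lt_or_ge m u.length with hlt | hge
        · rw [Nat.mod_eq_of_lt hlt]
        · have h1 : W m = W (m - u.length) := by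
            have := hper (m - u.length)
            rwa [Nat.sub_add_cancel hge] at this
          rw [h1, ih (m - u.length) (by omega)]
          congr 1
          exact (Nat.mod_eq_sub_mod hge).symm
    rintro v ⟨i, hi⟩ hlen
    set p : List A := List.ofFn fun j : Fin u.length => W j with hp
    have hplen : p.length = u.length := by simp [hp]
    have hrot : v = p.rotate (i % u.length) := by
      apply List.ext_get
      · simp [hlen, hplen]
      · intro k h1 h2
        have hk : k < u.length := by rwa [hlen] at h1
        have h3 : k < (p.rotate (i % u.length)).length := by
          simpa [hplen] using hk
        rw [List.get_rotate]
        have hget : ∀ (n : ℕ) (hn : n < p.length),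
            p.get ⟨n, hn⟩ = W n := by
          intro n hn
          simp [hp, List.get_ofFn]
        rw [hget, ← hi k h1, hmod (i + k)]
        congr 1
        simp only [hplen]
        rw [Nat.add_mod_mod, Nat.add_comm]
    have hvp : p ~r v := ⟨i % u.length, hrot.symm⟩
    obtain ⟨x, y, hxy, hp2⟩ := hshift
    have hup : u ~r p := (isCyclicShift_iff_isRotated p u).mp ⟨x, y, hxy, hp2⟩
    exact (isCyclicShift_iff_isRotated v u).mpr (hup.trans hvp)
end

section
/- Let W and H be infinite words over an alphabet B such that H is uniformly recurrent and every factor of H is a factor of W. Then W is uniformly recurrent if and only if every factor of W is a factor of H. -/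

lemma occursAt_ofFn {B : Type*} (W : ℕ → B) (i N : ℕ) :
    OccursAt (List.ofFn fun j : Fin N => W (i + j)) W i := by
  intro j hj
  simp at hj ⊢

lemma factorOf_of_infix {B : Type*} {u v : List B} {W : ℕ → B}
    (h : u <:+: v) (hv : FactorOf v W) : FactorOf u W := by
  obtain ⟨s, t, rfl⟩ := h
  obtain ⟨i, hi⟩ := hv
  refine ⟨i + s.length, fun j hj => ?_⟩
  have h2 : s.length + j < (s ++ u ++ t).length := by
    simp [List.length_append]; omega
  have := hi (s.length + j) h2
  rw [← Nat.add_assoc] at this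
  rw [this]
  simp [List.get_eq_getElem, List.getElem_append, hj]

/-- comparison with a uniformly recurrent word whose factors all
occur in `W`. -/
theorem unifRec_iff_factors_subset {B : Type*} (W H : ℕ → B)
    (hH : UniformlyRecurrent H)
    (hsub : ∀ u : List B, FactorOf u H → FactorOf u W) :
    UniformlyRecurrent W ↔ ∀ u : List B, FactorOf u W → FactorOf u H := by
  constructor
  · intro hW u hu
    obtain ⟨N, hN⟩ := hW u hu
    set v := List.ofFn fun j : Fin N => H j with hv
    have hvH : FactorOf v H := ⟨0, by simpa [hv] using occursAt_ofFn H 0 N⟩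
    have hinfix : u <:+: v := hN v (hsub v hvH) (by simp [hv])
    exact factorOf_of_infix hinfix hvH
  · intro h u hu
    obtain ⟨N, hN⟩ := hH u (h u hu)
    exact ⟨N, fun v hv hlen => hN v (h v hv) hlen⟩
end

section
/- Let φ be a nonerasing substitution on a finite alphabet A that is prolongable over a letter a₁. If the set of φ-bounded factors of the fixed point φ^∞(a₁) is infinite, then there exists a nonempty finite word U such that for every k : ℕ the k-fold concatenation U^k is a factor of φ^∞(a₁). -/
namespace PowAux

variable {α β : Type*}

/-- word map of a letter-to-word morphism -/
def wmap (f : α → List β) (u : List α) : List β := (u.map f).flatten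

@[simp] lemma wmap_nil (f : α → List β) : wmap f [] = [] := rfl

lemma wmap_cons (f : α → List β) (a : α) (u : List α) :
    wmap f (a :: u) = f a ++ wmap f u := by simp [wmap]

lemma wmap_append (f : α → List β) (u v : List α) :
    wmap f (u ++ v) = wmap f u ++ wmap f v := by simp [wmap]

/-- infix of an append: trichotomy -/
lemma infix_append_tri {v x y : List α} (h : v <:+: x ++ y) :
    v <:+: x ∨ v <:+: y ∨
      ∃ s t, v = s ++ t ∧ s ≠ [] ∧ t ≠ [] ∧ s <:+ x ∧ t <+: y := by
  obtain ⟨p, q, hpq⟩ := h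
  rcases le_or_gt (p.length + v.length) x.length with hle | hgt
  · -- v inside x
    left
    refine ⟨p, (q.take (x.length - p.length - v.length)), ?_⟩
    have hx : x = List.take x.length (x ++ y) := by simp
    rw [← hpq] at hx
    rw [show p ++ v ++ q = p ++ (v ++ q) by simp, List.take_append,
      List.take_append] at hx
    have h1 : List.take x.length p = p := List.take_of_length_le (by omega)
    have h2 : List.take (x.length - p.length) v = v := List.take_of_length_le (by omega)
    rw [h1, h2] at hx
    rw [hx]; simp [List.append_assoc]
  rcases le_or_gt x.length p.length with hxp | hpx
  · -- v inside y
    right; left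
    refine ⟨p.drop x.length, q, ?_⟩
    have hy : y = List.drop x.length (x ++ y) := by simp
    rw [← hpq] at hy
    rw [show p ++ v ++ q = p ++ (v ++ q) by simp, List.drop_append] at hy
    have : x.length - p.length = 0 := by omega
    rw [this] at hy
    simpa [List.append_assoc] using hy.symm
  · -- straddling
    right; right
    refine ⟨v.take (x.length - p.length), v.drop (x.length - p.length), by simp, ?_, ?_, ?_, ?_⟩
    · intro hnil
      have h1 : (v.take (x.length - p.length)).length = 0 := by rw [hnil]; rfl
      rw [List.length_take] at h1
      omega
    · intro hnil
      have h1 : (v.drop (x.length - p.length)).length = 0 := by rw [hnil]; rfl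
      rw [List.length_drop] at h1
      omega
    · -- suffix of x
      have hx : x = List.take x.length (x ++ y) := by simp
      rw [← hpq] at hx
      rw [show p ++ v ++ q = p ++ (v ++ q) by simp, List.take_append,
        List.take_append] at hx
      have h1 : List.take x.length p = p := List.take_of_length_le (by omega)
      have h2 : x.length - p.length - v.length = 0 := by omega
      rw [h1, h2] at hx
      simp at hx
      exact ⟨p, hx.symm⟩
    · -- prefix of y
      have hy : y = List.drop x.length (x ++ y) := by simp
      rw [← hpq] at hy
      rw [show p ++ v ++ q = p ++ (v ++ q) by simp, List.drop_append,
        List.drop_append] at hy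
      have h1 : List.drop x.length p = [] := by
        apply List.drop_eq_nil_of_le; omega
      rw [h1] at hy
      have h2 : x.length - p.length - v.length = 0 := by omega
      rw [h2] at hy
      simp at hy
      exact ⟨q, hy.symm⟩

/-- a nonempty prefix of `wmap f u` ends inside some block -/
lemma prefix_wmap_split (f : α → List β) :
    ∀ (u : List α) (t : List β), t ≠ [] → t <+: wmap f u →
    ∃ m b u₂ t', u = m ++ b :: u₂ ∧ t' ≠ [] ∧ t' <+: f b ∧ t = wmap f m ++ t' := by
  intro u
  induction u with
  | nil => intro t ht hp; simp [wmap] at hp; exact absurd hp ht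
  | cons b u ih =>
    intro t ht hp
    rw [wmap_cons] at hp
    have h1 : t = List.take t.length (f b ++ wmap f u) := List.prefix_iff_eq_take.mp hp
    rw [List.take_append] at h1
    rcases le_or_gt t.length (f b).length with hle | hgt
    · have h2 : t.length - (f b).length = 0 := by omega
      rw [h2] at h1
      simp only [List.take_zero, List.append_nil] at h1
      exact ⟨[], b, u, t, by simp, ht, List.prefix_iff_eq_take.mpr h1, by simp⟩
    · rw [List.take_of_length_le (by omega : (f b).length ≤ t.length)] at h1
      have hlen : t.length ≤ (f b).length + (wmap f u).length := by
        have := hp.length_le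
        simpa using this
      set t₂ := List.take (t.length - (f b).length) (wmap f u) with ht₂def
      have ht₂ne : t₂ ≠ [] := by
        intro h
        have h2 : t₂.length = 0 := by rw [h]; rfl
        rw [ht₂def, List.length_take] at h2
        omega
      obtain ⟨m, b', u₂, t', hu, ht'ne, ht'p, ht'eq⟩ :=
        ih t₂ ht₂ne (List.take_prefix _ _)
      refine ⟨b :: m, b', u₂, t', by simp [hu], ht'ne, ht'p, ?_⟩
      rw [wmap_cons, List.append_assoc, ← ht'eq, h1]

/-- main splitting lemma -/
lemma infix_wmap_split (f : α → List β) :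
    ∀ (u : List α) (v : List β), v ≠ [] → v <:+: wmap f u →
    (∃ a ∈ u, v <:+: f a) ∨
    (∃ u₁ a m b u₂ s t, u = u₁ ++ a :: (m ++ b :: u₂) ∧ s ≠ [] ∧ t ≠ [] ∧
      s <:+ f a ∧ t <+: f b ∧ v = s ++ wmap f m ++ t) := by
  intro u
  induction u with
  | nil => intro v hv hinf; simp [wmap] at hinf; exact absurd hinf hv
  | cons a u ih =>
    intro v hv hinf
    rw [wmap_cons] at hinf
    rcases infix_append_tri hinf with h | h | ⟨s, t, hv', hs, htne, hsx, hty⟩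
    · exact Or.inl ⟨a, by simp, h⟩
    · rcases ih v hv h with ⟨a', ha', hin⟩ | ⟨u₁, a', m, b, u₂, s, t, hu, h1, h2, h3, h4, h5⟩
      · exact Or.inl ⟨a', by simp [ha'], hin⟩
      · exact Or.inr ⟨a :: u₁, a', m, b, u₂, s, t, by simp [hu], h1, h2, h3, h4, h5⟩
    · obtain ⟨m, b, u₂, t', hu, ht'ne, ht'p, ht'eq⟩ := prefix_wmap_split f u t htne hty
      refine Or.inr ⟨[], a, m, b, u₂, s, t', by simp [hu], hs, ht'ne, hsx, ht'p, ?_⟩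
      rw [hv', ht'eq, List.append_assoc]

/-- last element satisfying p, with everything after failing p -/
lemma exists_last_decomp {p : α → Prop} :
    ∀ (l : List α), (∃ x ∈ l, p x) →
    ∃ z g t, l = z ++ g :: t ∧ p g ∧ ∀ y ∈ t, ¬ p y := by
  intro l
  induction l with
  | nil => rintro ⟨x, hx, _⟩; simp at hx
  | cons a l ih =>
    rintro ⟨x, hx, hpx⟩
    by_cases h : ∃ x ∈ l, p x
    · obtain ⟨z, g, t, hl, hg, ht⟩ := ih h
      exact ⟨a :: z, g, t, by simp [hl], hg, ht⟩
    · have hx' : x = a := by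
        rcases List.mem_cons.mp hx with h' | h'
        · exact h'
        · exact absurd ⟨x, h', hpx⟩ h
      refine ⟨[], a, l, by simp, hx' ▸ hpx, ?_⟩
      intro y hy hpy; exact h ⟨y, hy, hpy⟩

/-- first element satisfying p -/
lemma exists_first_decomp {p : α → Prop} :
    ∀ (l : List α), (∃ x ∈ l, p x) →
    ∃ z g t, l = z ++ g :: t ∧ p g ∧ ∀ y ∈ z, ¬ p y := by
  intro l
  induction l with
  | nil => rintro ⟨x, hx, _⟩; simp at hx
  | cons a l ih =>
    rintro ⟨x, hx, hpx⟩
    by_cases hpa : p a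
    · exact ⟨[], a, l, by simp, hpa, by simp⟩
    · have hx' : x ∈ l := by
        rcases List.mem_cons.mp hx with h' | h'
        · exact absurd (h' ▸ hpx) hpa
        · exact h'
      obtain ⟨z, g, t, hl, hg, ht⟩ := ih ⟨x, hx', hpx⟩
      refine ⟨a :: z, g, t, by simp [hl], hg, ?_⟩
      intro y hy
      rcases List.mem_cons.mp hy with h' | h'
      · exact h' ▸ hpa
      · exact ht y h'

/-- uniqueness of the "last p with all-after ¬p" decomposition -/
lemma last_decomp_unique {p : α → Prop} {z₁ z₂ t₁ t₂ : List α} {g₁ g₂ : α}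
    (heq : z₁ ++ g₁ :: t₁ = z₂ ++ g₂ :: t₂)
    (hg₁ : p g₁) (hg₂ : p g₂) (ht₁ : ∀ y ∈ t₁, ¬ p y) (ht₂ : ∀ y ∈ t₂, ¬ p y) :
    z₁ = z₂ ∧ g₁ = g₂ ∧ t₁ = t₂ := by
  have hlen : z₁.length = z₂.length := by
    by_contra hne
    rcases Nat.lt_or_ge z₁.length z₂.length with hlt | hge
    · have : g₂ ∈ t₁ := by
        have h1 : List.drop (z₁.length + 1) (z₁ ++ g₁ :: t₁) = t₁ := by
          rw [show z₁ ++ g₁ :: t₁ = (z₁ ++ [g₁]) ++ t₁ by simp,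
            show z₁.length + 1 = (z₁ ++ [g₁]).length by simp, List.drop_left]
        have h2 : g₂ ∈ List.drop (z₁.length + 1) (z₂ ++ g₂ :: t₂) := by
          rw [List.drop_append]
          have h3 : g₂ ∈ List.drop (z₁.length + 1 - z₂.length) (g₂ :: t₂) := by
            have h4 : z₁.length + 1 - z₂.length = 0 := by omega
            rw [h4]; simp
          exact List.mem_append.mpr (Or.inr h3)
        rw [← heq, h1] at h2
        exact h2
      exact (ht₁ g₂ this) hg₂
    · have hgt : z₂.length < z₁.length := by omega
      have : g₁ ∈ t₂ := by
        have h1 : List.drop (z₂.length + 1) (z₂ ++ g₂ :: t₂) = t₂ := by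
          rw [show z₂ ++ g₂ :: t₂ = (z₂ ++ [g₂]) ++ t₂ by simp,
            show z₂.length + 1 = (z₂ ++ [g₂]).length by simp, List.drop_left]
        have h2 : g₁ ∈ List.drop (z₂.length + 1) (z₁ ++ g₁ :: t₁) := by
          rw [List.drop_append]
          have h3 : g₁ ∈ List.drop (z₂.length + 1 - z₁.length) (g₁ :: t₁) := by
            have h4 : z₂.length + 1 - z₁.length = 0 := by omega
            rw [h4]; simp
          exact List.mem_append.mpr (Or.inr h3)
        rw [heq, h1] at h2
        exact h2
      exact (ht₂ g₁ this) hg₁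
  obtain ⟨hz, hc⟩ := List.append_inj heq hlen
  exact ⟨hz, by simpa using hc⟩


/-- uniqueness of the "first p with all-before ¬p" decomposition -/
lemma first_decomp_unique {p : α → Prop} {z₁ z₂ t₁ t₂ : List α} {g₁ g₂ : α}
    (heq : z₁ ++ g₁ :: t₁ = z₂ ++ g₂ :: t₂)
    (hg₁ : p g₁) (hg₂ : p g₂) (hz₁ : ∀ y ∈ z₁, ¬ p y) (hz₂ : ∀ y ∈ z₂, ¬ p y) :
    z₁ = z₂ ∧ g₁ = g₂ ∧ t₁ = t₂ := by
  have hlen : z₁.length = z₂.length := by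
    by_contra hne
    rcases Nat.lt_or_ge z₁.length z₂.length with hlt | hge
    · have : g₁ ∈ z₂ := by
        have h1 : List.take z₂.length (z₂ ++ g₂ :: t₂) = z₂ := List.take_left' rfl
        have h2 : g₁ ∈ List.take z₂.length (z₁ ++ g₁ :: t₁) := by
          rw [List.take_append]
          refine List.mem_append.mpr (Or.inr ?_)
          have h3 : z₂.length - z₁.length = (z₂.length - z₁.length - 1) + 1 := by omega
          rw [h3, List.take_succ_cons]
          simp
        rw [heq, h1] at h2
        exact h2
      exact (hz₂ g₁ this) hg₁
    · have hgt : z₂.length < z₁.length := by omega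
      have : g₂ ∈ z₁ := by
        have h1 : List.take z₁.length (z₁ ++ g₁ :: t₁) = z₁ := List.take_left' rfl
        have h2 : g₂ ∈ List.take z₁.length (z₂ ++ g₂ :: t₂) := by
          rw [List.take_append]
          refine List.mem_append.mpr (Or.inr ?_)
          have h3 : z₁.length - z₂.length = (z₁.length - z₂.length - 1) + 1 := by omega
          rw [h3, List.take_succ_cons]
          simp
        rw [← heq, h1] at h2
        exact h2
      exact (hz₁ g₂ this) hg₂
  obtain ⟨hz, hc⟩ := List.append_inj heq hlen
  exact ⟨hz, by simpa using hc⟩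


end PowAux


namespace PowThm

open PowAux

variable {A : Type*} [Fintype A]

/-- bundled context -/
structure Ctx (A : Type*) [Fintype A] where
  φ : A → List A
  a₁ : A
  X : ℕ → A
  hne : Nonerasing φ
  hpro : Prolongable φ a₁
  hX : IsFixedPoint φ a₁ X

namespace Ctx

variable (C : Ctx A)

attribute [local instance] Classical.propDecidable

/-- iterated morphism on words -/
def it (n : ℕ) (w : List A) : List A := (applyMorph C.φ)^[n] w

lemma ap_append (u v : List A) : applyMorph C.φ (u ++ v) = applyMorph C.φ u ++ applyMorph C.φ v := by
  simp [applyMorph]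

@[simp] lemma ap_nil : applyMorph C.φ ([] : List A) = [] := rfl

lemma it_succ_out (n : ℕ) (w : List A) :
    C.it (n+1) w = applyMorph C.φ (C.it n w) := Function.iterate_succ_apply' _ n w

lemma it_succ_in (n : ℕ) (w : List A) :
    C.it (n+1) w = C.it n (applyMorph C.φ w) := Function.iterate_succ_apply _ n w

@[simp] lemma it_nil (n : ℕ) : C.it n [] = [] := by
  induction n with
  | zero => rfl
  | succ n ih => rw [it_succ_out, ih]; rfl

lemma it_append (n : ℕ) (u v : List A) : C.it n (u ++ v) = C.it n u ++ C.it n v := by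
  induction n with
  | zero => rfl
  | succ n ih =>
    rw [it_succ_out, it_succ_out, it_succ_out, ih, ap_append]

lemma it_cons (n : ℕ) (a : A) (u : List A) : C.it n (a :: u) = C.it n [a] ++ C.it n u := by
  have := C.it_append n [a] u
  simpa using this

lemma it_add (m n : ℕ) (u : List A) : C.it (m + n) u = C.it m (C.it n u) :=
  Function.iterate_add_apply _ m n u

@[simp] lemma it_zero (u : List A) : C.it 0 u = u := rfl

lemma it_one (u : List A) : C.it 1 u = applyMorph C.φ u := rfl

lemma it_wmap (n : ℕ) (u : List A) : C.it n u = wmap (fun a => C.it n [a]) u := by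
  induction u with
  | nil => simp
  | cons a u ih => rw [it_cons, wmap_cons, ih]

lemma len_ap_ge (u : List A) : u.length ≤ (applyMorph C.φ u).length := by
  induction u with
  | nil => simp
  | cons a u ih =>
    have : applyMorph C.φ (a :: u) = C.φ a ++ applyMorph C.φ u := by simp [applyMorph]
    rw [this]
    have h1 : 1 ≤ (C.φ a).length := List.length_pos_iff.mpr (C.hne a)
    simp only [List.length_append, List.length_cons]
    omega

lemma len_it_mono_succ (n : ℕ) (u : List A) : (C.it n u).length ≤ (C.it (n+1) u).length := by
  rw [it_succ_out]
  exact C.len_ap_ge _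

lemma len_it_mono {m n : ℕ} (h : m ≤ n) (u : List A) : (C.it m u).length ≤ (C.it n u).length := by
  induction n with
  | zero => simp_all
  | succ n ih =>
    rcases Nat.lt_or_ge m (n+1) with h' | h'
    · exact le_trans (ih (by omega)) (C.len_it_mono_succ n u)
    · have : m = n + 1 := by omega
      subst this; rfl

lemma len_it_ge (n : ℕ) (u : List A) : u.length ≤ (C.it n u).length := by
  simpa using C.len_it_mono (Nat.zero_le n) u

lemma it_ne_nil {u : List A} (hu : u ≠ []) (n : ℕ) : C.it n u ≠ [] := by
  intro h
  have h2 := C.len_it_ge n u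
  rw [h, List.length_nil, Nat.le_zero] at h2
  exact hu (List.length_eq_zero_iff.mp h2)

lemma mem_len_le {a : A} {u : List A} (ha : a ∈ u) (n : ℕ) :
    (C.it n [a]).length ≤ (C.it n u).length := by
  obtain ⟨s, t, rfl⟩ := List.append_of_mem ha
  rw [show s ++ a :: t = s ++ [a] ++ t by simp, C.it_append, C.it_append]
  simp only [List.length_append]
  omega

/-- bounded letter -/
def Bdd (a : A) : Prop := ∃ M, ∀ n, (C.it n [a]).length ≤ M

def Grow (a : A) : Prop := ¬ C.Bdd a

def allB (u : List A) : Prop := ∀ a ∈ u, C.Bdd a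

lemma allB_nil : C.allB [] := by intro a h; simp at h

lemma bdd_of_mem_it {a b : A} (ha : C.Bdd a) {m : ℕ} (hb : b ∈ C.it m [a]) : C.Bdd b := by
  obtain ⟨M, hM⟩ := ha
  refine ⟨M, fun n => ?_⟩
  calc (C.it n [b]).length ≤ (C.it n (C.it m [a])).length := C.mem_len_le hb n
    _ = (C.it (n + m) [a]).length := by rw [C.it_add]
    _ ≤ M := hM _

lemma allB_bound {u : List A} (hu : C.allB u) : ∃ M, ∀ n, (C.it n u).length ≤ M := by
  induction u with
  | nil => exact ⟨0, fun n => by simp⟩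
  | cons a v ih =>
    obtain ⟨M₁, hM₁⟩ := hu a (by simp)
    obtain ⟨M₂, hM₂⟩ := ih (fun x hx => hu x (by simp [hx]))
    refine ⟨M₁ + M₂, fun n => ?_⟩
    rw [C.it_cons]
    simp only [List.length_append]
    exact Nat.add_le_add (hM₁ n) (hM₂ n)

lemma allB_it {u : List A} (hu : C.allB u) (m : ℕ) : C.allB (C.it m u) := by
  intro b hb
  rw [C.it_wmap] at hb
  rw [wmap] at hb
  simp only [List.mem_flatten, List.mem_map] at hb
  obtain ⟨l, ⟨a, ha, rfl⟩, hbl⟩ := hb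
  exact C.bdd_of_mem_it (hu a ha) hbl

lemma grow_of_allB_it {a : A} {m : ℕ} (h : C.allB (C.it m [a])) : C.Bdd a := by
  obtain ⟨M, hM⟩ := C.allB_bound h
  refine ⟨M, fun n => ?_⟩
  rcases le_or_gt n m with hle | hgt
  · calc (C.it n [a]).length ≤ (C.it m [a]).length := C.len_it_mono hle _
      _ = (C.it 0 (C.it m [a])).length := by simp
      _ ≤ M := hM 0
  · calc (C.it n [a]).length = (C.it (n - m + m) [a]).length := by rw [Nat.sub_add_cancel (le_of_lt hgt)]
      _ = (C.it (n - m) (C.it m [a])).length := by rw [C.it_add]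
      _ ≤ M := hM _

lemma exists_grow_mem {a : A} (ha : C.Grow a) (m : ℕ) : ∃ b ∈ C.it m [a], C.Grow b := by
  by_contra h
  push_neg at h
  have : C.allB (C.it m [a]) := by
    intro b hb
    have := h b hb
    rw [Grow, not_not] at this
    exact this
  exact ha (C.grow_of_allB_it this)

/-- prefixes of the fixed point -/
def P (n : ℕ) : List A := C.it n [C.a₁]

lemma P_prefixOf (n : ℕ) : PrefixOf (C.P n) C.X := C.hX n

lemma P_len (n : ℕ) : n + 1 ≤ (C.P n).length := by
  induction n with
  | zero => simp [P]
  | succ n ih =>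
    obtain ⟨v, hv, hvne⟩ := C.hpro
    have h1 : C.P (n+1) = C.P n ++ C.it n v := by
      rw [P, P, it_succ_in]
      have h0 : applyMorph C.φ [C.a₁] = C.a₁ :: v := by simp [applyMorph, hv]
      rw [h0, C.it_cons]
    have h2 : C.it n v ≠ [] := hvne n
    have h3 : 1 ≤ (C.it n v).length := List.length_pos_iff.mpr h2
    rw [h1]
    simp only [List.length_append]
    omega

lemma X_zero : C.X 0 = C.a₁ := by
  have := C.P_prefixOf 0 0 (by simp [P])
  simpa [P] using this

lemma grow_a₁ : C.Grow C.a₁ := by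
  rintro ⟨M, hM⟩
  have h1 := C.P_len M
  have h2 := hM M
  rw [← P] at h2
  omega

/-! ### eventual periodicity of bounded letters, stabilization exponent -/

lemma bdd_ev_per {a : A} (ha : C.Bdd a) :
    ∃ np : ℕ × ℕ, 1 ≤ np.2 ∧ ∀ m, np.1 ≤ m → C.it (m + np.2) [a] = C.it m [a] := by
  obtain ⟨M, hM⟩ := ha
  haveI : Finite {l : List A | l.length ≤ M} := (List.finite_length_le A M).to_subtype
  obtain ⟨n₁, n₂, hne', heq⟩ := Finite.exists_ne_map_eq_of_infinite
    (f := fun n : ℕ => (⟨C.it n [a], hM n⟩ : {l : List A | l.length ≤ M}))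
  have heq' : C.it n₁ [a] = C.it n₂ [a] := congrArg Subtype.val heq
  rcases Nat.lt_or_ge n₁ n₂ with hlt | hge
  · refine ⟨(n₁, n₂ - n₁), by omega, fun m hm => ?_⟩
    have h1 : m + (n₂ - n₁) = (m - n₁) + n₂ := by omega
    have h2 : m = (m - n₁) + n₁ := by omega
    rw [h1, C.it_add, ← heq', ← C.it_add, ← h2]
  · have hlt : n₂ < n₁ := by omega
    refine ⟨(n₂, n₁ - n₂), by omega, fun m hm => ?_⟩
    have h1 : m + (n₁ - n₂) = (m - n₂) + n₁ := by omega
    have h2 : m = (m - n₂) + n₂ := by omega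
    rw [h1, C.it_add, heq', ← C.it_add, ← h2]

noncomputable def nb (a : A) : ℕ :=
  if h : C.Bdd a then (C.bdd_ev_per h).choose.1 else 0

noncomputable def pb (a : A) : ℕ :=
  if h : C.Bdd a then (C.bdd_ev_per h).choose.2 else 1

lemma pb_pos (a : A) : 1 ≤ C.pb a := by
  rw [pb]
  split
  · next h => exact (C.bdd_ev_per h).choose_spec.1
  · exact le_refl 1

lemma pb_per {a : A} (ha : C.Bdd a) :
    ∀ m, C.nb a ≤ m → C.it (m + C.pb a) [a] = C.it m [a] := by
  rw [nb, pb, dif_pos ha, dif_pos ha]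
  exact (C.bdd_ev_per ha).choose_spec.2

noncomputable def NN : ℕ := (∏ a : A, C.pb a) * ((Finset.univ.sup C.nb) + 1)

lemma NN_pos : 1 ≤ C.NN := by
  have h1 : 1 ≤ ∏ a : A, C.pb a := Finset.one_le_prod' (fun a _ => C.pb_pos a)
  have h2 : 1 ≤ (Finset.univ.sup C.nb) + 1 := by omega
  calc 1 = 1 * 1 := by ring
    _ ≤ _ := Nat.mul_le_mul h1 h2

lemma pb_dvd (a : A) : C.pb a ∣ C.NN :=
  Dvd.dvd.mul_right (Finset.dvd_prod_of_mem _ (Finset.mem_univ a)) _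

lemma nb_le (a : A) : C.nb a ≤ C.NN := by
  have h1 : C.nb a ≤ Finset.univ.sup C.nb := Finset.le_sup (Finset.mem_univ a)
  have h2 : 1 ≤ ∏ a : A, C.pb a := Finset.one_le_prod' (fun a _ => C.pb_pos a)
  have h3 : (Finset.univ.sup C.nb) + 1 ≤ C.NN := by
    rw [NN]
    calc (Finset.univ.sup C.nb) + 1 = 1 * ((Finset.univ.sup C.nb) + 1) := by ring
      _ ≤ _ := Nat.mul_le_mul h2 (le_refl _)
  omega

lemma per_ext {a : A} (ha : C.Bdd a) {m m' : ℕ} (h1 : C.nb a ≤ m) (h2 : m ≤ m')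
    (h3 : C.pb a ∣ m' - m) : C.it m' [a] = C.it m [a] := by
  obtain ⟨s, hs⟩ := h3
  have hm' : m' = m + C.pb a * s := by omega
  subst hm'
  clear h2 hs
  induction s with
  | zero => simp
  | succ s ih =>
    have h4 : m + C.pb a * (s + 1) = (m + C.pb a * s) + C.pb a := by ring
    rw [h4, C.pb_per ha _ (by omega), ih]

lemma stab_letter {a : A} (ha : C.Bdd a) {j : ℕ} (hj : 1 ≤ j) :
    C.it (j * C.NN) [a] = C.it C.NN [a] := by
  apply C.per_ext ha (C.nb_le a)
  · calc C.NN = 1 * C.NN := by ring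
      _ ≤ j * C.NN := Nat.mul_le_mul hj (le_refl _)
  · have : j * C.NN - C.NN = (j - 1) * C.NN := by
      rw [Nat.sub_mul, Nat.one_mul]
    rw [this]
    exact Dvd.dvd.mul_left (C.pb_dvd a) _

lemma stab_word {u : List A} (hu : C.allB u) {j : ℕ} (hj : 1 ≤ j) :
    C.it (j * C.NN) u = C.it C.NN u := by
  rw [C.it_wmap (j * C.NN), C.it_wmap C.NN, wmap, wmap]
  congr 1
  apply List.map_congr_left
  intro a hau
  exact C.stab_letter (hu a hau) hj

lemma it_NN_idem {u : List A} (hu : C.allB u) :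
    C.it C.NN (C.it C.NN u) = C.it C.NN u := by
  rw [← C.it_add]
  have : C.NN + C.NN = 2 * C.NN := by ring
  rw [this]
  exact C.stab_word hu (by omega)

/-! ### the block-size constant -/

noncomputable def K : ℕ := max 2 (Finset.univ.sup fun a => (C.it C.NN [a]).length)

lemma K_ge_two : 2 ≤ C.K := le_max_left _ _

lemma block_le_K (a : A) : (C.it C.NN [a]).length ≤ C.K := by
  rw [K]
  exact le_trans (Finset.le_sup (f := fun a => (C.it C.NN [a]).length) (Finset.mem_univ a))
    (le_max_right _ _)

lemma block_pos (a : A) : 1 ≤ (C.it C.NN [a]).length :=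
  List.length_pos_iff.mpr (C.it_ne_nil (by simp) _)

lemma len_it_NN_le (u : List A) : (C.it C.NN u).length ≤ C.K * u.length := by
  induction u with
  | nil => simp
  | cons a v ih =>
    rw [C.it_cons]
    simp only [List.length_append, List.length_cons]
    have := C.block_le_K a
    calc (C.it C.NN [a]).length + (C.it C.NN v).length ≤ C.K + C.K * v.length := by omega
      _ = C.K * (v.length + 1) := by ring

/-! ### occurrence and factor infrastructure -/

lemma prefixOf_get {v : List A} (h : PrefixOf v C.X) {j : ℕ} (hj : j < v.length) :
    C.X j = v.get ⟨j, hj⟩ := by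
  have := h j hj
  rwa [Nat.zero_add] at this

lemma prefixOf_getElem {v : List A} (h : PrefixOf v C.X) {j : ℕ} (hj : j < v.length) :
    C.X j = v[j]'hj := by
  have := C.prefixOf_get h hj
  simpa [List.get_eq_getElem] using this

lemma occursAt_append {u v : List A} {i : ℕ} (hu : OccursAt u C.X i)
    (hv : OccursAt v C.X (i + u.length)) : OccursAt (u ++ v) C.X i := by
  intro j hj
  rcases Nat.lt_or_ge j u.length with h | h
  · rw [List.get_eq_getElem, List.getElem_append_left h]
    exact hu j h
  · rw [List.get_eq_getElem, List.getElem_append_right h]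
    have hlen : j - u.length < v.length := by
      rw [List.length_append] at hj; omega
    have := hv (j - u.length) hlen
    rw [List.get_eq_getElem] at this
    rw [← this]
    congr 1
    omega

lemma prefixOf_prefix {u v : List A} (hu : PrefixOf u C.X) (hv : PrefixOf v C.X)
    (h : u.length ≤ v.length) : u <+: v := by
  have : u = v.take u.length := by
    apply List.ext_getElem
    · rw [List.length_take]; omega
    · intro n h₁ h₂
      rw [List.getElem_take]
      have e1 := C.prefixOf_get hu (j := n) h₁
      have e2 := C.prefixOf_get hv (j := n) (by omega)
      rw [List.get_eq_getElem] at e1 e2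
      rw [← e1, ← e2]
  rw [this]
  exact List.take_prefix _ _

lemma P_prefix_P {m n : ℕ} (h : m ≤ n) : C.P m <+: C.P n :=
  C.prefixOf_prefix (C.P_prefixOf m) (C.P_prefixOf n) (C.len_it_mono h [C.a₁])

lemma factor_of_infix_P {v : List A} {n : ℕ} (h : v <:+: C.P n) : FactorOf v C.X := by
  obtain ⟨x, y, hxy⟩ := h
  refine ⟨x.length, fun j hj => ?_⟩
  have hlen : x.length + j < (C.P n).length := by
    rw [← hxy]
    simp only [List.length_append]
    omega
  have e1 := C.prefixOf_get (C.P_prefixOf n) hlen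
  rw [e1]
  rw [List.get_eq_getElem, List.get_eq_getElem]
  have e2 : (C.P n)[x.length + j]'hlen
      = (x ++ v ++ y)[x.length + j]'(by rw [hxy]; exact hlen) :=
    List.getElem_of_eq hxy.symm _
  rw [e2, List.getElem_append_left (by rw [List.length_append]; omega),
    List.getElem_append_right (by omega)]
  simp only [Nat.add_sub_cancel_left]

lemma factor_to_infix_P {v : List A} (h : FactorOf v C.X) : ∃ n, v <:+: C.P n := by
  obtain ⟨i, hocc⟩ := h
  refine ⟨i + v.length, ?_⟩
  set n := i + v.length with hn
  have hlen : i + v.length ≤ (C.P n).length := by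
    have := C.P_len n
    omega
  have hv : v = ((C.P n).drop i).take v.length := by
    apply List.ext_getElem
    · rw [List.length_take, List.length_drop]
      omega
    · intro j h₁ h₂
      rw [List.getElem_take, List.getElem_drop]
      have e1 := C.prefixOf_get (C.P_prefixOf n) (j := i + j) (by omega)
      rw [List.get_eq_getElem] at e1
      rw [← e1]
      have := hocc j h₁
      rw [List.get_eq_getElem] at this
      exact this.symm
  rw [hv]
  exact ((List.take_prefix _ _).isInfix).trans ((List.drop_suffix _ _).isInfix)

lemma factorOf_infix {u v : List A} (huv : u <:+: v) (hv : FactorOf v C.X) :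
    FactorOf u C.X := by
  obtain ⟨n, hn⟩ := C.factor_to_infix_P hv
  exact C.factor_of_infix_P (huv.trans hn)

lemma factorOf_nil : FactorOf ([] : List A) C.X :=
  ⟨0, fun j hj => by simp at hj⟩

lemma it_factor (m : ℕ) {v : List A} (h : FactorOf v C.X) : FactorOf (C.it m v) C.X := by
  obtain ⟨n, x, y, hxy⟩ := C.factor_to_infix_P h
  have h1 : C.it m (C.P n) = C.P (m + n) := by
    rw [P, P, ← C.it_add]
  refine C.factor_of_infix_P (n := m + n) ?_
  rw [← h1, ← hxy, C.it_append, C.it_append]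
  exact ⟨C.it m x, C.it m y, rfl⟩

/-! ### segments of X -/

def seg (i n : ℕ) : List A := (List.range n).map (fun j => C.X (i + j))

@[simp] lemma seg_length (i n : ℕ) : (C.seg i n).length = n := by simp [seg]

lemma occursAt_seg (i n : ℕ) : OccursAt (C.seg i n) C.X i := by
  intro j hj
  rw [List.get_eq_getElem]
  simp [seg]

lemma factorOf_seg (i n : ℕ) : FactorOf (C.seg i n) C.X := ⟨i, C.occursAt_seg i n⟩

lemma seg_append (i n m : ℕ) : C.seg i (n + m) = C.seg i n ++ C.seg (i + n) m := by
  rw [seg, seg, seg, List.range_add, List.map_append, List.map_map]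
  congr 1
  apply List.map_congr_left
  intro j hj
  simp only [Function.comp_apply]
  congr 1
  omega

lemma seg_one (i : ℕ) : C.seg i 1 = [C.X i] := by simp [seg, List.range_succ]

lemma seg_get (i n j : ℕ) (hj : j < n) : (C.seg i n).get ⟨j, by simp [hj]⟩ = C.X (i + j) := by
  rw [List.get_eq_getElem]
  simp [seg]

/-! ### last/first growing letter in a block -/

lemma exists_lg_decomp {c : A} (hc : C.Grow c) :
    ∃ x : List A × A × List A, C.it C.NN [c] = x.1 ++ x.2.1 :: x.2.2 ∧
      C.Grow x.2.1 ∧ C.allB x.2.2 := by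
  obtain ⟨b, hb, hgb⟩ := C.exists_grow_mem hc C.NN
  obtain ⟨z, g, t, hl, hg, ht⟩ := exists_last_decomp (p := C.Grow) _ ⟨b, hb, hgb⟩
  exact ⟨(z, g, t), hl, hg, fun y hy => not_not.mp (ht y hy)⟩

lemma exists_fg_decomp {c : A} (hc : C.Grow c) :
    ∃ x : List A × A × List A, C.it C.NN [c] = x.1 ++ x.2.1 :: x.2.2 ∧
      C.Grow x.2.1 ∧ C.allB x.1 := by
  obtain ⟨b, hb, hgb⟩ := C.exists_grow_mem hc C.NN
  obtain ⟨z, g, t, hl, hg, hz⟩ := exists_first_decomp (p := C.Grow) _ ⟨b, hb, hgb⟩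
  exact ⟨(z, g, t), hl, hg, fun y hy => not_not.mp (hz y hy)⟩

noncomputable def lgT (c : A) : List A × A × List A :=
  if h : ∃ x : List A × A × List A, C.it C.NN [c] = x.1 ++ x.2.1 :: x.2.2 ∧
      C.Grow x.2.1 ∧ C.allB x.2.2 then h.choose else ([], c, [])

noncomputable def lg (c : A) : A := (C.lgT c).2.1
noncomputable def zR (c : A) : List A := (C.lgT c).1
noncomputable def tR (c : A) : List A := (C.lgT c).2.2

lemma lg_spec {c : A} (hc : C.Grow c) :
    C.it C.NN [c] = C.zR c ++ C.lg c :: C.tR c ∧ C.Grow (C.lg c) ∧ C.allB (C.tR c) := by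
  rw [lg, zR, tR, lgT, dif_pos (C.exists_lg_decomp hc)]
  exact (C.exists_lg_decomp hc).choose_spec

noncomputable def fgT (c : A) : List A × A × List A :=
  if h : ∃ x : List A × A × List A, C.it C.NN [c] = x.1 ++ x.2.1 :: x.2.2 ∧
      C.Grow x.2.1 ∧ C.allB x.1 then h.choose else ([], c, [])

noncomputable def fg (c : A) : A := (C.fgT c).2.1
noncomputable def tL (c : A) : List A := (C.fgT c).1
noncomputable def zL (c : A) : List A := (C.fgT c).2.2

lemma fg_spec {c : A} (hc : C.Grow c) :
    C.it C.NN [c] = C.tL c ++ C.fg c :: C.zL c ∧ C.Grow (C.fg c) ∧ C.allB (C.tL c) := by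
  rw [fg, tL, zL, fgT, dif_pos (C.exists_fg_decomp hc)]
  exact (C.exists_fg_decomp hc).choose_spec

lemma lg_eq {c : A} (hc : C.Grow c) {z t : List A} {g : A}
    (hdec : C.it C.NN [c] = z ++ g :: t) (hg : C.Grow g) (ht : C.allB t) :
    C.lg c = g ∧ C.tR c = t := by
  obtain ⟨h1, h2, h3⟩ := C.lg_spec hc
  rw [h1] at hdec
  obtain ⟨_, hgeq, hteq⟩ := last_decomp_unique (p := C.Grow) hdec h2 hg
    (fun y hy hgy => hgy (h3 y hy)) (fun y hy hgy => hgy (ht y hy))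
  exact ⟨hgeq, hteq⟩

lemma fg_eq {c : A} (hc : C.Grow c) {z t : List A} {g : A}
    (hdec : C.it C.NN [c] = z ++ g :: t) (hg : C.Grow g) (hz : C.allB z) :
    C.fg c = g ∧ C.tL c = z := by
  obtain ⟨h1, h2, h3⟩ := C.fg_spec hc
  rw [h1] at hdec
  obtain ⟨hzeq, hgeq, _⟩ := first_decomp_unique (p := C.Grow) hdec h2 hg
    (fun y hy hgy => hgy (h3 y hy)) (fun y hy hgy => hgy (hz y hy))
  exact ⟨hgeq, hzeq⟩


/-! ### iterates of flatten/replicate -/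

lemma it_flatten (m : ℕ) (L : List (List A)) :
    C.it m L.flatten = (L.map (C.it m)).flatten := by
  induction L with
  | nil => simp
  | cons l L ih => rw [List.flatten_cons, C.it_append, ih, List.map_cons, List.flatten_cons]

lemma it_rep (m k : ℕ) (U : List A) :
    C.it m (List.replicate k U).flatten = (List.replicate k (C.it m U)).flatten := by
  rw [C.it_flatten, List.map_replicate]

lemma allB_append {u v : List A} (hu : C.allB u) (hv : C.allB v) : C.allB (u ++ v) := by
  intro a ha
  rcases List.mem_append.mp ha with h | h
  · exact hu a h
  · exact hv a h

lemma allB_rep {U : List A} (hU : C.allB U) (k : ℕ) :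
    C.allB (List.replicate k U).flatten := by
  intro a ha
  rw [List.mem_flatten] at ha
  obtain ⟨l, hl, hal⟩ := ha
  rw [List.eq_of_mem_replicate hl] at hal
  exact hU a hal

lemma grow_lg_iter {c : A} (hc : C.Grow c) (j : ℕ) : C.Grow (C.lg^[j] c) := by
  induction j with
  | zero => exact hc
  | succ j ih =>
    rw [Function.iterate_succ_apply']
    exact (C.lg_spec ih).2.1

lemma grow_fg_iter {c : A} (hc : C.Grow c) (j : ℕ) : C.Grow (C.fg^[j] c) := by
  induction j with
  | zero => exact hc
  | succ j ih =>
    rw [Function.iterate_succ_apply']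
    exact (C.fg_spec ih).2.1

/-! ### accumulation of tails along iterated blocks -/

lemma acc_right {c : A} (hc : C.Grow c) :
    ∀ j, 1 ≤ j → ∃ Z S, C.it (j * C.NN) [c] = Z ++ (C.lg^[j] c) :: S ∧
      C.allB S ∧ (C.tR c ≠ [] → S ≠ []) := by
  intro j hj
  induction j with
  | zero => omega
  | succ j ih =>
    rcases Nat.eq_or_lt_of_le hj with h1 | h1
    · -- j + 1 = 1
      have hj0 : j = 0 := by omega
      subst hj0
      obtain ⟨hdec, hg, ht⟩ := C.lg_spec hc
      exact ⟨C.zR c, C.tR c, by simpa using hdec, ht, fun h => h⟩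
    · have hj' : 1 ≤ j := by omega
      obtain ⟨Z, S, hdec, hSB, hSne⟩ := ih hj'
      have hgj : C.Grow (C.lg^[j] c) := C.grow_lg_iter hc j
      obtain ⟨hdec', hg', ht'⟩ := C.lg_spec hgj
      have e1 : (j+1) * C.NN = C.NN + j * C.NN := by ring
      refine ⟨C.it C.NN Z ++ C.zR (C.lg^[j] c),
        C.tR (C.lg^[j] c) ++ C.it C.NN S, ?_, ?_, ?_⟩
      · rw [e1, C.it_add, hdec,
          show Z ++ (C.lg^[j] c) :: S = Z ++ [C.lg^[j] c] ++ S by simp,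
          C.it_append, C.it_append, hdec', Function.iterate_succ_apply']
        simp [List.append_assoc]
      · exact C.allB_append ht' (C.allB_it hSB C.NN)
      · intro h
        have := C.it_ne_nil (hSne h) C.NN
        intro hcon
        rw [List.append_eq_nil_iff] at hcon
        exact this hcon.2

lemma acc_left {c : A} (hc : C.Grow c) :
    ∀ j, 1 ≤ j → ∃ Z S, C.it (j * C.NN) [c] = S ++ (C.fg^[j] c) :: Z ∧
      C.allB S ∧ (C.tL c ≠ [] → S ≠ []) := by
  intro j hj
  induction j with
  | zero => omega
  | succ j ih =>
    rcases Nat.eq_or_lt_of_le hj with h1 | h1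
    · have hj0 : j = 0 := by omega
      subst hj0
      obtain ⟨hdec, hg, ht⟩ := C.fg_spec hc
      exact ⟨C.zL c, C.tL c, by simpa using hdec, ht, fun h => h⟩
    · have hj' : 1 ≤ j := by omega
      obtain ⟨Z, S, hdec, hSB, hSne⟩ := ih hj'
      have hgj : C.Grow (C.fg^[j] c) := C.grow_fg_iter hc j
      obtain ⟨hdec', hg', ht'⟩ := C.fg_spec hgj
      have e1 : (j+1) * C.NN = C.NN + j * C.NN := by ring
      refine ⟨C.zL (C.fg^[j] c) ++ C.it C.NN Z,
        C.it C.NN S ++ C.tL (C.fg^[j] c), ?_, ?_, ?_⟩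
      · rw [e1, C.it_add, hdec,
          show S ++ (C.fg^[j] c) :: Z = S ++ [C.fg^[j] c] ++ Z by simp,
          C.it_append, C.it_append, hdec', Function.iterate_succ_apply']
        simp [List.append_assoc]
      · exact C.allB_append (C.allB_it hSB C.NN) ht'
      · intro h
        have := C.it_ne_nil (hSne h) C.NN
        intro hcon
        rw [List.append_eq_nil_iff] at hcon
        exact this hcon.1

/-! ### pumping lemmas -/

lemma pump_right {g : A} (hfac : FactorOf [g] C.X) {q : ℕ} (hq : 1 ≤ q) {Z S : List A}
    (hdec : C.it (q * C.NN) [g] = Z ++ g :: S) (hSB : C.allB S) (hSne : S ≠ []) :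
    ∃ U : List A, U ≠ [] ∧ ∀ k : ℕ, FactorOf (List.replicate k U).flatten C.X := by
  set R := q * C.NN with hR
  set U := C.it C.NN S with hU
  have hUB : C.allB U := C.allB_it hSB C.NN
  have hstabS : C.it R S = U := C.stab_word hSB hq
  have hUfix : C.it R U = U := by
    rw [hU, ← C.it_add]
    have e : R + C.NN = (q + 1) * C.NN := by rw [hR]; ring
    rw [e, C.stab_word hSB (by omega)]
  have key : ∀ k : ℕ, ∃ Z', C.it ((k+1) * R) [g]
      = Z' ++ g :: (S ++ (List.replicate k U).flatten) := by
    intro k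
    induction k with
    | zero => exact ⟨Z, by simpa using hdec⟩
    | succ k ih =>
      obtain ⟨Z', hZ'⟩ := ih
      have e1 : (k+2) * R = R + (k+1) * R := by ring
      refine ⟨C.it R Z' ++ Z, ?_⟩
      rw [e1, C.it_add, hZ',
        show Z' ++ g :: (S ++ (List.replicate k U).flatten)
          = Z' ++ [g] ++ (S ++ (List.replicate k U).flatten) by simp,
        C.it_append, C.it_append, hdec, C.it_append, hstabS]
      have hrep : C.it R (List.replicate k U).flatten = (List.replicate k U).flatten := by
        rw [C.it_rep, hUfix]
      rw [hrep,
        show List.replicate (k+1) U = U :: List.replicate k U from List.replicate_succ,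
        List.flatten_cons]
      simp [List.append_assoc]
  refine ⟨U, C.it_ne_nil hSne C.NN, fun k => ?_⟩
  obtain ⟨Z', hZ'⟩ := key k
  have hfac2 : FactorOf (C.it ((k+1) * R) [g]) C.X := C.it_factor _ hfac
  apply C.factorOf_infix _ hfac2
  rw [hZ']
  exact ⟨Z' ++ g :: S, [], by simp [List.append_assoc]⟩

lemma pump_left {g : A} (hfac : FactorOf [g] C.X) {q : ℕ} (hq : 1 ≤ q) {Z S : List A}
    (hdec : C.it (q * C.NN) [g] = S ++ g :: Z) (hSB : C.allB S) (hSne : S ≠ []) :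
    ∃ U : List A, U ≠ [] ∧ ∀ k : ℕ, FactorOf (List.replicate k U).flatten C.X := by
  set R := q * C.NN with hR
  set U := C.it C.NN S with hU
  have hUB : C.allB U := C.allB_it hSB C.NN
  have hstabS : C.it R S = U := C.stab_word hSB hq
  have hUfix : C.it R U = U := by
    rw [hU, ← C.it_add]
    have e : R + C.NN = (q + 1) * C.NN := by rw [hR]; ring
    rw [e, C.stab_word hSB (by omega)]
  have key : ∀ k : ℕ, ∃ Z', C.it ((k+1) * R) [g]
      = ((List.replicate k U).flatten ++ S) ++ g :: Z' := by
    intro k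
    induction k with
    | zero => exact ⟨Z, by simpa using hdec⟩
    | succ k ih =>
      obtain ⟨Z', hZ'⟩ := ih
      have e1 : (k+2) * R = R + (k+1) * R := by ring
      refine ⟨Z ++ C.it R Z', ?_⟩
      rw [e1, C.it_add, hZ',
        show ((List.replicate k U).flatten ++ S) ++ g :: Z'
          = (List.replicate k U).flatten ++ S ++ [g] ++ Z' by simp,
        C.it_append, C.it_append, C.it_append, hdec, hstabS]
      have hrep : C.it R (List.replicate k U).flatten = (List.replicate k U).flatten := by
        rw [C.it_rep, hUfix]
      rw [hrep,
        show List.replicate (k+1) U = List.replicate k U ++ [U] from List.replicate_succ',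
        List.flatten_append]
      simp [List.append_assoc]
  refine ⟨U, C.it_ne_nil hSne C.NN, fun k => ?_⟩
  obtain ⟨Z', hZ'⟩ := key k
  have hfac2 : FactorOf (C.it ((k+1) * R) [g]) C.X := C.it_factor _ hfac
  apply C.factorOf_infix _ hfac2
  rw [hZ']
  exact ⟨[], S ++ g :: Z', by simp [List.append_assoc]⟩

/-! ### membership in segments, prefix tools -/

lemma seg_mem {a : A} {i n : ℕ} (h : a ∈ C.seg i n) : ∃ j, j < n ∧ a = C.X (i + j) := by
  rw [seg, List.mem_map] at h
  obtain ⟨j, hj, rfl⟩ := h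
  exact ⟨j, List.mem_range.mp hj, rfl⟩

lemma prefixOf_seg (n : ℕ) : PrefixOf (C.seg 0 n) C.X := C.occursAt_seg 0 n

lemma prefix_of_prefixOf {u v : List A} (h : u <+: v) (hv : PrefixOf v C.X) :
    PrefixOf u C.X := by
  intro j hj
  have hjv : j < v.length := lt_of_lt_of_le hj h.length_le
  have := hv j hjv
  rw [Nat.zero_add] at this ⊢
  rw [this, List.get_eq_getElem, List.get_eq_getElem]
  exact (h.getElem hj).symm

lemma it_prefixOf {v : List A} (hv : PrefixOf v C.X) (m : ℕ) :
    PrefixOf (C.it m v) C.X := by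
  have hvP : v <+: C.P v.length := by
    apply C.prefixOf_prefix hv (C.P_prefixOf _)
    have := C.P_len v.length
    omega
  obtain ⟨y, hy⟩ := hvP
  have h2 : C.it m v <+: C.P (m + v.length) := by
    have h3 : C.P (m + v.length) = C.it m (C.P v.length) := by rw [P, P, ← C.it_add]
    rw [h3, ← hy, C.it_append]
    exact ⟨C.it m y, rfl⟩
  exact C.prefix_of_prefixOf h2 (C.P_prefixOf _)

lemma rep_length (k : ℕ) (U : List A) :
    (List.replicate k U).flatten.length = k * U.length := by
  induction k with
  | zero => simp
  | succ k ih =>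
    rw [List.replicate_succ, List.flatten_cons, List.length_append, ih]
    ring

/-! ### the infinite-bounded-tail case: ultimately periodic -/

lemma tail_case (htail : ∃ r, ∀ s, r ≤ s → C.Bdd (C.X s)) :
    ∃ U : List A, U ≠ [] ∧ ∀ k : ℕ, FactorOf (List.replicate k U).flatten C.X := by
  obtain ⟨r₀, hr₀⟩ := htail
  set r := max r₀ 1 with hrdef
  have hr : ∀ s, r ≤ s → C.Bdd (C.X s) := fun s hs => hr₀ s (le_trans (le_max_left _ _) hs)
  have hr1 : 1 ≤ r := le_max_right _ _
  set x := C.seg 0 r with hx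
  have hwB : ∀ l, C.allB (C.seg r l) := by
    intro l a ha
    obtain ⟨j, hj, rfl⟩ := C.seg_mem ha
    exact hr _ (by omega)
  have hpre : ∀ l, PrefixOf (x ++ C.seg r l) C.X := by
    intro l
    have := C.seg_append 0 r l
    rw [Nat.zero_add] at this
    rw [hx, ← this]
    exact C.prefixOf_seg _
  -- image prefixes
  have hitpre : ∀ k l, 1 ≤ k →
      PrefixOf (C.it (k * C.NN) x ++ C.it C.NN (C.seg r l)) C.X := by
    intro k l hk
    have h1 := C.it_prefixOf (hpre l) (k * C.NN)
    rw [C.it_append, C.stab_word (hwB l) hk] at h1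
    exact h1
  have hkey : ∀ k l s, 1 ≤ k → ∀ (hs : s < (C.it C.NN (C.seg r l)).length),
      C.X ((C.it (k * C.NN) x).length + s) = (C.it C.NN (C.seg r l))[s]'hs := by
    intro k l s hk hs
    have hlt : (C.it (k * C.NN) x).length + s
        < (C.it (k * C.NN) x ++ C.it C.NN (C.seg r l)).length := by
      rw [List.length_append]; omega
    have h1 := C.prefixOf_getElem (hitpre k l hk) hlt
    rw [h1, List.getElem_append_right (by omega)]
    simp only [Nat.add_sub_cancel_left]
  set d : ℕ → ℕ := fun k => (C.it (k * C.NN) x).length with hd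
  have ha₁x : C.a₁ ∈ x := by
    have : C.X 0 ∈ x := by
      rw [hx]
      have h0 : (C.seg 0 r).get ⟨0, by simp; omega⟩ = C.X 0 := by
        have := C.seg_get 0 r 0 (by omega)
        simpa using this
      rw [← h0]
      exact List.get_mem _ _
    rwa [C.X_zero] at this
  have hdlb : ∀ k, k * C.NN + 1 ≤ d k := by
    intro k
    show k * C.NN + 1 ≤ (C.it (k * C.NN) x).length
    have h1 := C.mem_len_le ha₁x (k * C.NN)
    have h2 := C.P_len (k * C.NN)
    rw [← P] at h1
    omega
  set k' := d 1 + 1 with hk'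
  have hdlt : d 1 < d k' := by
    have h1 := hdlb k'
    have h2 := C.NN_pos
    have : k' ≤ k' * C.NN := by
      calc k' = k' * 1 := by ring
        _ ≤ k' * C.NN := Nat.mul_le_mul (le_refl _) h2
    omega
  set e := d k' - d 1 with he
  have he1 : 1 ≤ e := by omega
  have hper : ∀ s, C.X (d 1 + s + e) = C.X (d 1 + s) := by
    intro s
    set l := s + 1 with hl
    have hlen : s < (C.it C.NN (C.seg r l)).length := by
      have h1 := C.len_it_ge C.NN (C.seg r l)
      rw [C.seg_length] at h1
      omega
    have e1 := hkey 1 l s (le_refl 1) hlen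
    have e2 := hkey k' l s (by omega) hlen
    rw [← e1] at e2
    have hdk1 : (C.it (1 * C.NN) x).length = d 1 := rfl
    have hdkk : (C.it (k' * C.NN) x).length = d k' := rfl
    rw [hdk1, hdkk] at e2
    have h3 : d k' = d 1 + e := by omega
    rw [h3] at e2
    have h4 : d 1 + s + e = d 1 + e + s := by ring
    rw [h4]
    exact e2
  have hpermul : ∀ m s, C.X (d 1 + s + m * e) = C.X (d 1 + s) := by
    intro m
    induction m with
    | zero => simp
    | succ m ih =>
      intro s
      have h1 : d 1 + s + (m + 1) * e = d 1 + (s + m * e) + e := by ring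
      rw [h1, hper (s + m * e)]
      have h2 : d 1 + (s + m * e) = d 1 + s + m * e := by ring
      rw [h2, ih s]
  refine ⟨C.seg (d 1) e, by
    intro h
    have := congrArg List.length h
    rw [C.seg_length] at this
    simp at this
    omega, ?_⟩
  intro k
  refine ⟨d 1, ?_⟩
  induction k with
  | zero => intro j hj; simp at hj
  | succ k ih =>
    have hocc2 : OccursAt (C.seg (d 1) e) C.X (d 1 + k * e) := by
      intro j hj
      rw [C.seg_length] at hj
      have h1 : d 1 + k * e + j = d 1 + j + k * e := by ring
      rw [h1, hpermul k j]
      exact (C.seg_get (d 1) e j hj).symm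
    have hrw : (List.replicate (k+1) (C.seg (d 1) e)).flatten
        = (List.replicate k (C.seg (d 1) e)).flatten ++ C.seg (d 1) e := by
      rw [show List.replicate (k+1) (C.seg (d 1) e)
          = List.replicate k (C.seg (d 1) e) ++ [C.seg (d 1) e] from List.replicate_succ',
        List.flatten_append]
      simp
    rw [hrw]
    apply C.occursAt_append ih
    rw [rep_length, C.seg_length]
    exact hocc2

/-! ### arbitrarily long bounded factors -/

lemma phiBounded_allB {w : List A} (hb : PhiBounded C.φ w) : C.allB w := by
  obtain ⟨n₀, p, hp, hper⟩ := hb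
  have hstab : ∀ j, C.it (n₀ + j * p) w = C.it n₀ w := by
    intro j
    induction j with
    | zero => simp
    | succ j ih =>
      have h2 : C.it (n₀ + j * p + p) w = C.it (n₀ + j * p) w := hper (n₀ + j * p) (by omega)
      have h1 : n₀ + (j + 1) * p = n₀ + j * p + p := by ring
      rw [h1, h2, ih]
  have hbound : ∀ m, (C.it m w).length ≤ (C.it n₀ w).length := by
    intro m
    rcases le_or_gt m n₀ with h | h
    · exact C.len_it_mono h w
    · have h1 : m ≤ n₀ + m * p := by
        have : m ≤ m * p := by
          calc m = m * 1 := by ring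
            _ ≤ m * p := Nat.mul_le_mul (le_refl _) hp
        omega
      calc (C.it m w).length ≤ (C.it (n₀ + m * p) w).length := C.len_it_mono h1 w
        _ = (C.it n₀ w).length := by rw [hstab m]
  intro a ha
  exact ⟨(C.it n₀ w).length, fun m => le_trans (C.mem_len_le ha m) (hbound m)⟩

lemma exists_long_B_factor
    (hinf : {w : List A | FactorOf w C.X ∧ PhiBounded C.φ w}.Infinite) :
    ∀ n, ∃ v, FactorOf v C.X ∧ C.allB v ∧ n ≤ v.length := by
  intro n
  have : ∃ w ∈ {w : List A | FactorOf w C.X ∧ PhiBounded C.φ w}, ¬ (w.length ≤ n) := by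
    by_contra h
    push_neg at h
    exact hinf (Set.Finite.subset (List.finite_length_le A n) h)
  obtain ⟨w, ⟨hf, hb⟩, hlen⟩ := this
  exact ⟨w, hf, C.phiBounded_allB hb, by omega⟩

/-! ### existence of flanked long bounded blocks (no bounded tail) -/

lemma exists_flanked
    (hnotail : ∀ r, ∃ s, r ≤ s ∧ C.Grow (C.X s))
    (hinf : {w : List A | FactorOf w C.X ∧ PhiBounded C.φ w}.Infinite) :
    ∀ n, ∃ (c d : A) (w : List A), C.Grow c ∧ C.Grow d ∧ C.allB w ∧ n ≤ w.length ∧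
      FactorOf (c :: (w ++ [d])) C.X := by
  intro n
  obtain ⟨v, hf, hvB, hvlen⟩ := C.exists_long_B_factor hinf (max n 1)
  have hv1 : 1 ≤ v.length := le_trans (le_max_right _ _) hvlen
  obtain ⟨i, hocc⟩ := hf
  have hpos : ∀ p, i ≤ p → p < i + v.length → C.Bdd (C.X p) := by
    intro p h1 h2
    have h3 : p - i < v.length := by omega
    have := hocc (p - i) h3
    have h4 : i + (p - i) = p := by omega
    rw [h4] at this
    rw [this]
    exact hvB _ (List.get_mem _ _)
  have hi1 : 1 ≤ i := by
    by_contra h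
    have hi0 : i = 0 := by omega
    have := hpos 0 (by omega) (by omega)
    rw [C.X_zero] at this
    exact C.grow_a₁ this
  -- leftmost growing position before i
  have hP0 : C.Grow (C.X 0) := by rw [C.X_zero]; exact C.grow_a₁
  set l := Nat.findGreatest (fun p => C.Grow (C.X p)) (i - 1) with hl
  have hlg : C.Grow (C.X l) := Nat.findGreatest_spec (P := fun p => C.Grow (C.X p)) (m := 0) (n := i - 1) (by omega) hP0
  have hlle : l ≤ i - 1 := Nat.findGreatest_le _
  have hlmax : ∀ p, l < p → p ≤ i - 1 → ¬ C.Grow (C.X p) := by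
    intro p h1 h2
    exact Nat.findGreatest_is_greatest (P := fun p => C.Grow (C.X p)) (n := i - 1) h1 h2
  -- rightmost end
  have hex : ∃ s, i + v.length ≤ s ∧ C.Grow (C.X s) := hnotail (i + v.length)
  set s₀ := Nat.find hex with hs₀
  have hs₀spec := Nat.find_spec hex
  have hs₀min : ∀ p, p < s₀ → ¬ (i + v.length ≤ p ∧ C.Grow (C.X p)) :=
    fun p hp => Nat.find_min hex hp
  refine ⟨C.X l, C.X s₀, C.seg (l + 1) (s₀ - l - 1), hlg, hs₀spec.2, ?_, ?_, ?_⟩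
  · intro a ha
    obtain ⟨j, hj, rfl⟩ := C.seg_mem ha
    set p := l + 1 + j with hp
    rcases Nat.lt_or_ge p i with h1 | h1
    · exact not_not.mp (hlmax p (by omega) (by omega))
    · rcases Nat.lt_or_ge p (i + v.length) with h2 | h2
      · exact hpos p h1 h2
      · have := hs₀min p (by omega)
        push_neg at this
        exact not_not.mp (this h2)
  · rw [C.seg_length]
    have := hs₀spec.1
    omega
  · have hlist : C.X l :: (C.seg (l + 1) (s₀ - l - 1) ++ [C.X s₀]) = C.seg l (s₀ - l + 1) := by
      have e1 : s₀ - l + 1 = 1 + (s₀ - l - 1) + 1 := by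
        have := hs₀spec.1
        omega
      rw [e1, C.seg_append, C.seg_append, C.seg_one, C.seg_one]
      have e2 : l + (1 + (s₀ - l - 1)) = s₀ := by
        have := hs₀spec.1
        omega
      rw [e2]
      simp
    rw [hlist]
    exact C.factorOf_seg _ _

/-! ### the desubstitution lemma -/

lemma desub {u : List A} {c d : A} {w : List A}
    (hin : (c :: (w ++ [d])) <:+: C.it C.NN u)
    (hwB : C.allB w) (hc : C.Grow c) (hd : C.Grow d) (hwK : C.K ≤ w.length) :
    ∃ (c' d' : A) (m : List A), (c' :: (m ++ [d'])) <:+: u ∧ C.allB m ∧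
      C.Grow c' ∧ C.Grow d' ∧ C.lg c' = c ∧ C.fg d' = d ∧
      w = C.tR c' ++ C.it C.NN m ++ C.tL d' := by
  set f : A → List A := fun a => C.it C.NN [a] with hf
  have hwm : C.it C.NN u = wmap f u := C.it_wmap C.NN u
  rw [hwm] at hin
  have hvne : (c :: (w ++ [d])) ≠ [] := by simp
  rcases infix_wmap_split f u _ hvne hin with ⟨a, hau, hblk⟩ |
    ⟨u₁, a, m, b, u₂, s, t, hu, hsne, htne, hsuf, hpre, hveq⟩
  · exfalso
    have h1 := hblk.length_le
    have h2 : (f a).length ≤ C.K := C.block_le_K a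
    simp only [List.length_cons, List.length_append, List.length_singleton] at h1
    omega
  · obtain ⟨s', rfl⟩ : ∃ s', s = c :: s' := by
      cases s with
      | nil => exact absurd rfl hsne
      | cons c₀ s' =>
        have hc₀ : c₀ = c := by
          have := congrArg (fun l => l.head?) hveq
          simpa using this.symm
        exact ⟨s', by rw [hc₀]⟩
    have hrest : w ++ [d] = s' ++ wmap f m ++ t := by
      have h := hveq
      simp only [List.cons_append] at h
      exact ((List.cons.injEq _ _ _ _).mp h).2
    rcases List.eq_nil_or_concat t with rfl | ⟨t', d₀, rfl⟩
    · exact absurd rfl htne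
    have hrest2 : w ++ [d] = (s' ++ wmap f m ++ t') ++ [d₀] := by
      rw [hrest]
      simp [List.append_assoc]
    obtain ⟨hweq, hdd⟩ := List.append_inj' hrest2 (by simp)
    have hd₀ : d₀ = d := by
      have := hdd
      simp at this
      exact this.symm
    rw [hd₀] at hpre
    -- bounded components
    have hs'B : C.allB s' := fun x hx => hwB x (by rw [hweq]; simp [hx])
    have ht'B : C.allB t' := fun x hx => hwB x (by rw [hweq]; simp [hx])
    have hwmB : ∀ x ∈ wmap f m, C.Bdd x := fun x hx => hwB x (by rw [hweq]; simp [hx])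
    have hmB : C.allB m := by
      intro x hx
      by_contra hgx
      obtain ⟨y, hy, hgy⟩ := C.exists_grow_mem hgx C.NN
      have hyw : y ∈ wmap f m := by
        rw [wmap, List.mem_flatten]
        exact ⟨f x, List.mem_map_of_mem hx, hy⟩
      exact hgy (hwmB y hyw)
    -- left block
    have hca : c ∈ f a := hsuf.subset (by simp)
    have hga : C.Grow a := by
      intro hba
      exact hc (C.bdd_of_mem_it hba hca)
    obtain ⟨z, hz⟩ := hsuf
    obtain ⟨hlg, htr⟩ := C.lg_eq hga (z := z) (g := c) (t := s') hz.symm hc hs'B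
    -- right block
    obtain ⟨rest, hrest3⟩ := hpre
    have hfb : f b = t' ++ d :: rest := by
      rw [← hrest3]
      simp [List.append_assoc]
    have hdb : d ∈ f b := by
      rw [hfb]
      simp
    have hgb : C.Grow b := by
      intro hbb
      exact hd (C.bdd_of_mem_it hbb hdb)
    obtain ⟨hfg, htl⟩ := C.fg_eq hgb hfb hd ht'B
    refine ⟨a, b, m, ⟨u₁, u₂, by rw [hu]; simp⟩, hmB, hga, hgb, hlg, hfg, ?_⟩
    rw [hweq, htr, htl, C.it_wmap]

/-! ### levels -/

noncomputable def QQ (t : ℕ) : List A := C.P (t * C.NN)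

lemma QQ_succ (t : ℕ) : C.QQ (t+1) = C.it C.NN (C.QQ t) := by
  have e : (t+1) * C.NN = C.NN + t * C.NN := by ring
  show C.P ((t+1) * C.NN) = C.it C.NN (C.P (t * C.NN))
  rw [show C.P ((t+1) * C.NN) = C.it ((t+1) * C.NN) [C.a₁] from rfl,
    show C.P (t * C.NN) = C.it (t * C.NN) [C.a₁] from rfl, e, C.it_add]

lemma factor_infix_QQ {v : List A} (h : FactorOf v C.X) : ∃ t, v <:+: C.QQ t := by
  obtain ⟨n, hn⟩ := C.factor_to_infix_P h
  refine ⟨n, hn.trans (List.IsPrefix.isInfix ?_)⟩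
  exact C.P_prefix_P (Nat.le_mul_of_pos_right n C.NN_pos)

lemma QQ_factor {v : List A} {t : ℕ} (h : v <:+: C.QQ t) : FactorOf v C.X :=
  C.factor_of_infix_P h

/-! ### cyclic letters -/

def cycL (c : A) : Prop := ∃ q, 1 ≤ q ∧ C.lg^[q] c = c
def cycR (d : A) : Prop := ∃ q, 1 ≤ q ∧ C.fg^[q] d = d

lemma tR_len {c : A} (hc : C.Grow c) : (C.tR c).length + 1 ≤ C.K := by
  have h := (C.lg_spec hc).1
  have h2 := C.block_le_K c
  have h3 := congrArg List.length h
  simp only [List.length_append, List.length_cons] at h3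
  omega

lemma tL_len {c : A} (hc : C.Grow c) : (C.tL c).length + 1 ≤ C.K := by
  have h := (C.fg_spec hc).1
  have h2 := C.block_le_K c
  have h3 := congrArg List.length h
  simp only [List.length_append, List.length_cons] at h3
  omega

/-! ### the descent bound -/

lemma desc
    (hE1 : ∀ c, C.Grow c → FactorOf [c] C.X → C.cycL c → C.tR c = [])
    (hE2 : ∀ d, C.Grow d → FactorOf [d] C.X → C.cycR d → C.tL d = []) :
    ∀ t : ℕ, ∀ (c d : A) (w : List A) (VL VR : Finset A),
      (c :: (w ++ [d])) <:+: C.QQ t → C.Grow c → C.Grow d → C.allB w →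
      (∀ v ∈ VL, ¬ C.cycL v ∧ ∃ r, C.lg^[r] c = v) →
      (∀ v ∈ VR, ¬ C.cycR v ∧ ∃ r, C.fg^[r] d = v) →
      (C.it C.NN w).length ≤ C.K * C.K +
        2 * (C.K * C.K) * ((Fintype.card A - VL.card) + (Fintype.card A - VR.card)) := by
  intro t
  induction t using Nat.strong_induction_on with
  | _ t IH =>
  intro c d w VL VR hin hc hd hwB hVL hVR
  rcases Nat.lt_or_ge w.length C.K with hsm | hbig
  · have h1 := C.len_it_NN_le w
    have h2 : C.K * w.length ≤ C.K * C.K := Nat.mul_le_mul (le_refl _) (by omega)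
    exact le_trans (le_trans h1 h2) (Nat.le_add_right _ _)
  · cases t with
    | zero =>
      exfalso
      have h1 := hin.length_le
      have h2 : (C.QQ 0).length = 1 := by
        show (C.P (0 * C.NN)).length = 1
        rw [Nat.zero_mul]
        rfl
      simp only [List.length_cons, List.length_append, List.length_singleton] at h1
      have := C.K_ge_two
      omega
    | succ t' =>
      rw [C.QQ_succ] at hin
      obtain ⟨c', d', m, hin', hmB, hgc', hgd', hlgc, hfgd, hweq⟩ :=
        C.desub hin hwB hc hd hbig
      have hfc' : FactorOf [c'] C.X := by
        apply C.factorOf_infix _ (C.QQ_factor hin')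
        exact ⟨[], m ++ [d'], rfl⟩
      have hfd' : FactorOf [d'] C.X := by
        apply C.factorOf_infix _ (C.QQ_factor hin')
        exact ⟨c' :: m, [], by simp⟩
      obtain ⟨VL', hVL', hpayL⟩ : ∃ VL' : Finset A,
          (∀ v ∈ VL', ¬ C.cycL v ∧ ∃ r, C.lg^[r] c' = v) ∧
          (C.it C.NN (C.tR c')).length
              + 2*(C.K*C.K) * (Fintype.card A - VL'.card)
            ≤ 2*(C.K*C.K) * (Fintype.card A - VL.card) := by
        by_cases htRe : C.tR c' = []
        · refine ⟨VL, ?_, ?_⟩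
          · intro v hv
            obtain ⟨hnc, r, hr⟩ := hVL v hv
            exact ⟨hnc, r+1, by rw [Function.iterate_succ_apply, hlgc]; exact hr⟩
          · rw [htRe]
            simp
        · have hncyc : ¬ C.cycL c' := fun hcyc => htRe (hE1 c' hgc' hfc' hcyc)
          have hnotmem : c' ∉ VL := by
            intro hmem
            obtain ⟨hnc, r, hr⟩ := hVL c' hmem
            exact hncyc ⟨r+1, by omega,
              by rw [Function.iterate_succ_apply, hlgc]; exact hr⟩
          refine ⟨insert c' VL, ?_, ?_⟩
          · intro v hv
            rcases Finset.mem_insert.mp hv with rfl | hv'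
            · exact ⟨hncyc, 0, rfl⟩
            · obtain ⟨hnc, r, hr⟩ := hVL v hv'
              exact ⟨hnc, r+1, by rw [Function.iterate_succ_apply, hlgc]; exact hr⟩
          · have hcard : (insert c' VL).card = VL.card + 1 :=
              Finset.card_insert_of_notMem hnotmem
            have hcard2 : (insert c' VL).card ≤ Fintype.card A :=
              Finset.card_le_univ _
            have htRlen := C.tR_len hgc'
            have haL : (C.it C.NN (C.tR c')).length ≤ C.K * C.K := by
              calc (C.it C.NN (C.tR c')).length ≤ C.K * (C.tR c').length :=
                  C.len_it_NN_le _
                _ ≤ C.K * C.K := Nat.mul_le_mul (le_refl _) (by omega)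
            have hx : Fintype.card A - VL.card
                = (Fintype.card A - (insert c' VL).card) + 1 := by omega
            rw [hx, Nat.mul_add, Nat.mul_one]
            have hKB : C.K * C.K ≤ 2 * (C.K * C.K) :=
              Nat.le_mul_of_pos_left _ (by omega)
            linarith
      obtain ⟨VR', hVR', hpayR⟩ : ∃ VR' : Finset A,
          (∀ v ∈ VR', ¬ C.cycR v ∧ ∃ r, C.fg^[r] d' = v) ∧
          (C.it C.NN (C.tL d')).length
              + 2*(C.K*C.K) * (Fintype.card A - VR'.card)
            ≤ 2*(C.K*C.K) * (Fintype.card A - VR.card) := by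
        by_cases htLe : C.tL d' = []
        · refine ⟨VR, ?_, ?_⟩
          · intro v hv
            obtain ⟨hnc, r, hr⟩ := hVR v hv
            exact ⟨hnc, r+1, by rw [Function.iterate_succ_apply, hfgd]; exact hr⟩
          · rw [htLe]
            simp
        · have hncyc : ¬ C.cycR d' := fun hcyc => htLe (hE2 d' hgd' hfd' hcyc)
          have hnotmem : d' ∉ VR := by
            intro hmem
            obtain ⟨hnc, r, hr⟩ := hVR d' hmem
            exact hncyc ⟨r+1, by omega,
              by rw [Function.iterate_succ_apply, hfgd]; exact hr⟩
          refine ⟨insert d' VR, ?_, ?_⟩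
          · intro v hv
            rcases Finset.mem_insert.mp hv with rfl | hv'
            · exact ⟨hncyc, 0, rfl⟩
            · obtain ⟨hnc, r, hr⟩ := hVR v hv'
              exact ⟨hnc, r+1, by rw [Function.iterate_succ_apply, hfgd]; exact hr⟩
          · have hcard : (insert d' VR).card = VR.card + 1 :=
              Finset.card_insert_of_notMem hnotmem
            have hcard2 : (insert d' VR).card ≤ Fintype.card A :=
              Finset.card_le_univ _
            have htLlen := C.tL_len hgd'
            have haR : (C.it C.NN (C.tL d')).length ≤ C.K * C.K := by
              calc (C.it C.NN (C.tL d')).length ≤ C.K * (C.tL d').length :=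
                  C.len_it_NN_le _
                _ ≤ C.K * C.K := Nat.mul_le_mul (le_refl _) (by omega)
            have hx : Fintype.card A - VR.card
                = (Fintype.card A - (insert d' VR).card) + 1 := by omega
            rw [hx, Nat.mul_add, Nat.mul_one]
            have hKB : C.K * C.K ≤ 2 * (C.K * C.K) :=
              Nat.le_mul_of_pos_left _ (by omega)
            linarith
      have hsplit : C.it C.NN w
          = C.it C.NN (C.tR c') ++ C.it C.NN m ++ C.it C.NN (C.tL d') := by
        rw [hweq, C.it_append, C.it_append, C.it_NN_idem hmB]
      have hlen : (C.it C.NN w).length = (C.it C.NN (C.tR c')).length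
          + (C.it C.NN m).length + (C.it C.NN (C.tL d')).length := by
        rw [hsplit]
        simp only [List.length_append]
      have hIH := IH t' (Nat.lt_succ_self t') c' d' m VL' VR' hin' hgc' hgd' hmB hVL' hVR'
      rw [Nat.mul_add] at hIH
      rw [Nat.mul_add (2*(C.K*C.K))]
      linarith

/-! ### deriving the emptiness conditions from non-pumpability -/

lemma hE1_of_noPump
    (hR : ¬ ∃ (g : A) (q : ℕ) (Z S : List A), 1 ≤ q ∧ FactorOf [g] C.X ∧
      C.it (q * C.NN) [g] = Z ++ g :: S ∧ C.allB S ∧ S ≠ []) :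
    ∀ c, C.Grow c → FactorOf [c] C.X → C.cycL c → C.tR c = [] := by
  intro c hg hf hcyc
  by_contra htne
  obtain ⟨q, hq, hcq⟩ := hcyc
  obtain ⟨Z, S, hdec, hSB, hSne⟩ := C.acc_right hg q hq
  rw [hcq] at hdec
  exact hR ⟨c, q, Z, S, hq, hf, hdec, hSB, hSne htne⟩

lemma hE2_of_noPump
    (hL : ¬ ∃ (g : A) (q : ℕ) (Z S : List A), 1 ≤ q ∧ FactorOf [g] C.X ∧
      C.it (q * C.NN) [g] = S ++ g :: Z ∧ C.allB S ∧ S ≠ []) :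
    ∀ d, C.Grow d → FactorOf [d] C.X → C.cycR d → C.tL d = [] := by
  intro d hg hf hcyc
  by_contra htne
  obtain ⟨q, hq, hcq⟩ := hcyc
  obtain ⟨Z, S, hdec, hSB, hSne⟩ := C.acc_left hg q hq
  rw [hcq] at hdec
  exact hL ⟨d, q, Z, S, hq, hf, hdec, hSB, hSne htne⟩

/-! ### main theorem, in context form -/

theorem main
    (hinf : {w : List A | FactorOf w C.X ∧ PhiBounded C.φ w}.Infinite) :
    ∃ U : List A, U ≠ [] ∧ ∀ k : ℕ, FactorOf (List.replicate k U).flatten C.X := by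
  by_cases htail : ∃ r, ∀ s, r ≤ s → C.Bdd (C.X s)
  · exact C.tail_case htail
  · have hnotail : ∀ r, ∃ s, r ≤ s ∧ C.Grow (C.X s) := by
      push_neg at htail
      intro r
      obtain ⟨s, hs1, hs2⟩ := htail r
      exact ⟨s, hs1, hs2⟩
    by_cases hR : ∃ (g : A) (q : ℕ) (Z S : List A), 1 ≤ q ∧ FactorOf [g] C.X ∧
        C.it (q * C.NN) [g] = Z ++ g :: S ∧ C.allB S ∧ S ≠ []
    · obtain ⟨g, q, Z, S, hq, hf, hdec, hSB, hSne⟩ := hR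
      exact C.pump_right hf hq hdec hSB hSne
    by_cases hL : ∃ (g : A) (q : ℕ) (Z S : List A), 1 ≤ q ∧ FactorOf [g] C.X ∧
        C.it (q * C.NN) [g] = S ++ g :: Z ∧ C.allB S ∧ S ≠ []
    · obtain ⟨g, q, Z, S, hq, hf, hdec, hSB, hSne⟩ := hL
      exact C.pump_left hf hq hdec hSB hSne
    · exfalso
      have hE1 := C.hE1_of_noPump hR
      have hE2 := C.hE2_of_noPump hL
      set BND := C.K * C.K + 2 * (C.K * C.K) * (Fintype.card A + Fintype.card A) with hBND
      obtain ⟨c, d, w, hgc, hgd, hwB, hwlen, hfac⟩ :=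
        C.exists_flanked hnotail hinf (BND + 1)
      obtain ⟨t, hin⟩ := C.factor_infix_QQ hfac
      have hb := C.desc hE1 hE2 t c d w ∅ ∅ hin hgc hgd hwB (by simp) (by simp)
      simp only [Finset.card_empty, Nat.sub_zero] at hb
      have h1 := C.len_it_ge C.NN w
      omega

end Ctx
end PowThm

/-- if there are infinitely many `φ`-bounded factors, then some
nonempty word `U` has all its powers as factors of the fixed point. -/
theorem powers_factor_of_infinite_bounded_factors {A : Type*} [Fintype A]
    (φ : A → List A) (a₁ : A) (hne : Nonerasing φ) (hpro : Prolongable φ a₁)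
    (X : ℕ → A) (hX : IsFixedPoint φ a₁ X)
    (hinf : {w : List A | FactorOf w X ∧ PhiBounded φ w}.Infinite) :
    ∃ U : List A, U ≠ [] ∧ ∀ k : ℕ, FactorOf (List.replicate k U).flatten X := by
  exact PowThm.Ctx.main ⟨φ, a₁, X, hne, hpro, hX⟩ hinf
end

section
/- Let φ be a nonerasing substitution on a finite alphabet A, prolongable over a letter a₁, such that every letter of A occurs in the fixed point X = φ^∞(a₁), every letter is φ-growing, and every letter a has a growth order (d a, θ a) with θ a > 1. Let (D, Θ) be the maximal pair among {(d a, θ a) : a ∈ A} with respect to the order (d₁,θ₁) < (d₂,θ₂) iff θ₁ < θ₂ or (θ₁ = θ₂ and d₁ < d₂). Then the set {n : ℕ | (d (X n), θ (X n)) = (D, Θ)} is infinite. -/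
/-! ### Auxiliary material for Statement 10 -/

namespace MaxGrowthAux

open Filter Topology

variable {A : Type*}

lemma applyMorph_append (φ : A → List A) (u v : List A) :
    applyMorph φ (u ++ v) = applyMorph φ u ++ applyMorph φ v := by
  simp [applyMorph]

lemma iter_append (φ : A → List A) (k : ℕ) (u v : List A) :
    (applyMorph φ)^[k] (u ++ v) = (applyMorph φ)^[k] u ++ (applyMorph φ)^[k] v := by
  induction k generalizing u v with
  | zero => simp
  | succ k ih =>
      rw [Function.iterate_succ_apply, Function.iterate_succ_apply,
        Function.iterate_succ_apply, applyMorph_append, ih]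

lemma iter_cons (φ : A → List A) (k : ℕ) (b : A) (v : List A) :
    (applyMorph φ)^[k] (b :: v) = (applyMorph φ)^[k] [b] ++ (applyMorph φ)^[k] v :=
  iter_append φ k [b] v

lemma iter_nil (φ : A → List A) (k : ℕ) : (applyMorph φ)^[k] ([] : List A) = [] := by
  induction k with
  | zero => rfl
  | succ k ih =>
      rw [Function.iterate_succ_apply]
      have h : applyMorph φ ([] : List A) = [] := by simp [applyMorph]
      rw [h, ih]

lemma iter_one (φ : A → List A) (a : A) : (applyMorph φ)^[1] [a] = φ a := by
  simp [applyMorph]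

lemma iter_length_cons (φ : A → List A) (k : ℕ) (b : A) (v : List A) :
    ((applyMorph φ)^[k] (b :: v)).length
      = ((applyMorph φ)^[k] [b]).length + ((applyMorph φ)^[k] v).length := by
  rw [iter_cons]; exact List.length_append

lemma iter_prefix (φ : A → List A) (k : ℕ) {u v : List A} (h : u <+: v) :
    (applyMorph φ)^[k] u <+: (applyMorph φ)^[k] v := by
  obtain ⟨t, rfl⟩ := h
  rw [iter_append]
  exact ⟨_, rfl⟩

lemma prefixOf_get {X : ℕ → A} {p : List A} (hp : PrefixOf p X) {j : ℕ}
    (hj : j < p.length) : X j = p[j] := by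
  have := hp j hj
  simpa using this

lemma prefixOf_mono {X : ℕ → A} {p q : List A} (hq : PrefixOf q X) (h : p <+: q) :
    PrefixOf p X := by
  intro j hj
  have h2 : j < q.length := lt_of_lt_of_le hj h.length_le
  have h3 := prefixOf_get hq h2
  simp only [List.get_eq_getElem, zero_add]
  rw [h3]
  exact (h.getElem hj).symm

lemma rangeMap_prefix {X : ℕ → A} {q : List A} (hq : PrefixOf q X) {m : ℕ}
    (hm : m ≤ q.length) : (List.range m).map X <+: q := by
  have he : (List.range m).map X = q.take m := by
    apply List.ext_getElem
    · simpa using hm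
    · intro i h1 h2
      have hi : i < m := by simpa using h1
      simp only [List.getElem_map, List.getElem_range, List.getElem_take]
      exact prefixOf_get hq (lt_of_lt_of_le hi hm)
  rw [he]
  exact List.take_prefix m q

lemma core_tendsto (dd e : ℕ) (θ Θ C : ℝ) (hθ : 1 ≤ θ) (hΘ : 1 < Θ) (hC : 0 ≤ C)
    (hlt : θ < Θ ∨ (θ = Θ ∧ dd < e)) :
    Tendsto (fun k : ℕ => C * (k : ℝ) ^ dd * θ ^ k / ((k : ℝ) ^ e * Θ ^ k))
      atTop (𝓝 0) := by
  have hθ0 : (0 : ℝ) < θ := lt_of_lt_of_le one_pos hθ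
  have hΘ0 : (0 : ℝ) < Θ := lt_trans one_pos hΘ
  rcases hlt with hlt | ⟨rfl, hde⟩
  · have hr0 : 0 ≤ θ / Θ := div_nonneg hθ0.le hΘ0.le
    have hr1 : θ / Θ < 1 := (div_lt_one hΘ0).2 hlt
    have hg : Tendsto (fun k : ℕ => C * ((k : ℝ) ^ dd * (θ / Θ) ^ k)) atTop (𝓝 0) := by
      simpa using (tendsto_pow_const_mul_const_pow_of_lt_one dd hr0 hr1).const_mul C
    refine squeeze_zero' ?_ ?_ hg
    · filter_upwards with k
      positivity
    · filter_upwards [eventually_ge_atTop 1] with k hk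
      have hk1 : (1 : ℝ) ≤ (k : ℝ) := by exact_mod_cast hk
      have h1 : (1 : ℝ) ≤ (k : ℝ) ^ e := one_le_pow₀ hk1
      have hΘk : (0 : ℝ) < Θ ^ k := pow_pos hΘ0 k
      have key : C * (k : ℝ) ^ dd * θ ^ k / ((k : ℝ) ^ e * Θ ^ k)
          ≤ C * (k : ℝ) ^ dd * θ ^ k / (1 * Θ ^ k) := by
        gcongr C * (k : ℝ) ^ dd * θ ^ k / ?_
        rw [one_mul]
        exact le_mul_of_one_le_left hΘk.le h1
      refine key.trans (le_of_eq ?_)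
      rw [div_pow]
      ring
  · refine squeeze_zero' ?_ ?_ (tendsto_const_div_atTop_nhds_zero_nat C)
    · filter_upwards with k
      positivity
    · filter_upwards [eventually_ge_atTop 1] with k hk
      have hk1 : (1 : ℝ) ≤ (k : ℝ) := by exact_mod_cast hk
      have hk0 : (0 : ℝ) < (k : ℝ) := lt_of_lt_of_le one_pos hk1
      have hΘk : (0 : ℝ) < θ ^ k := pow_pos hθ0 k
      rw [div_le_div_iff₀ (by positivity) hk0]
      have hpow : (k : ℝ) ^ dd * (k : ℝ) ≤ (k : ℝ) ^ e := by
        rw [← pow_succ]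
        exact pow_le_pow_right₀ hk1 hde
      calc C * (k : ℝ) ^ dd * θ ^ k * (k : ℝ)
          = C * ((k : ℝ) ^ dd * (k : ℝ)) * θ ^ k := by ring
        _ ≤ C * (k : ℝ) ^ e * θ ^ k := by gcongr
        _ = C * ((k : ℝ) ^ e * θ ^ k) := by ring

/-- `b` has growth of strictly smaller order than `(e, Θ)`. -/
def SmallBound (φ : A → List A) (e : ℕ) (Θ : ℝ) (b : A) : Prop :=
  ∃ (d' : ℕ) (θ' C : ℝ), 1 < θ' ∧ 0 < C ∧ (θ' < Θ ∨ (θ' = Θ ∧ d' < e)) ∧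
    ∀ k : ℕ, 1 ≤ k → (((applyMorph φ)^[k] [b]).length : ℝ) ≤ C * (k : ℝ) ^ d' * θ' ^ k

lemma smallBound_tendsto {φ : A → List A} {e : ℕ} {Θ : ℝ} (hΘ : 1 < Θ) {b : A}
    (h : SmallBound φ e Θ b) :
    Tendsto (fun k : ℕ => (((applyMorph φ)^[k] [b]).length : ℝ) / ((k : ℝ) ^ e * Θ ^ k))
      atTop (𝓝 0) := by
  obtain ⟨d', θ', C, hθ', hC, hlt, hub⟩ := h
  have hΘ0 : (0 : ℝ) < Θ := lt_trans one_pos hΘ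
  refine squeeze_zero' ?_ ?_ (core_tendsto d' e θ' Θ C hθ'.le hΘ hC.le hlt)
  · filter_upwards with k
    positivity
  · filter_upwards [eventually_ge_atTop 1] with k hk
    have hk0 : (0 : ℝ) < (k : ℝ) := by exact_mod_cast hk
    have hr : (0 : ℝ) < (k : ℝ) ^ e * Θ ^ k := by positivity
    exact (div_le_div_iff_of_pos_right hr).2 (hub k hk)

lemma smallBound_sum_tendsto {φ : A → List A} {e : ℕ} {Θ : ℝ} (hΘ : 1 < Θ) {b : A}
    (h : SmallBound φ e Θ b) :
    Tendsto (fun k : ℕ =>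
      (∑ j ∈ Finset.range k, (((applyMorph φ)^[j] [b]).length : ℝ)) / ((k : ℝ) ^ e * Θ ^ k))
      atTop (𝓝 0) := by
  obtain ⟨d', θ', C, hθ', hC, hlt, hub⟩ := h
  have hΘ0 : (0 : ℝ) < Θ := lt_trans one_pos hΘ
  have hθ0 : (0 : ℝ) < θ' := lt_trans one_pos hθ'
  have hterm : ∀ j : ℕ, (((applyMorph φ)^[j] [b]).length : ℝ)
      ≤ C * (j : ℝ) ^ d' * θ' ^ j + 1 := by
    intro j
    rcases Nat.eq_zero_or_pos j with rfl | hj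
    · have : (((applyMorph φ)^[0] [b]).length : ℝ) = 1 := by simp
      rw [this]
      have : (0 : ℝ) ≤ C * (0 : ℕ) ^ d' * θ' ^ 0 := by positivity
      push_cast at this ⊢
      linarith
    · have := hub j hj
      linarith
  have hsum : ∀ k : ℕ, 1 ≤ k →
      (∑ j ∈ Finset.range k, (((applyMorph φ)^[j] [b]).length : ℝ))
      ≤ (C / (θ' - 1)) * (k : ℝ) ^ d' * θ' ^ k + (k : ℝ) := by
    intro k hk
    have hk1 : (1 : ℝ) ≤ (k : ℝ) := by exact_mod_cast hk
    calc (∑ j ∈ Finset.range k, (((applyMorph φ)^[j] [b]).length : ℝ))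
        ≤ ∑ j ∈ Finset.range k, (C * (j : ℝ) ^ d' * θ' ^ j + 1) :=
          Finset.sum_le_sum fun j _ => hterm j
      _ = (∑ j ∈ Finset.range k, C * (j : ℝ) ^ d' * θ' ^ j) + (k : ℝ) := by
          rw [Finset.sum_add_distrib]
          simp
      _ ≤ (∑ j ∈ Finset.range k, C * (k : ℝ) ^ d' * θ' ^ j) + (k : ℝ) := by
          refine add_le_add_left (Finset.sum_le_sum fun j hj => ?_) _
          have hjk : (j : ℝ) ≤ (k : ℝ) := by
            exact_mod_cast (Finset.mem_range.1 hj).le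
          have hpw : (j : ℝ) ^ d' ≤ (k : ℝ) ^ d' :=
            pow_le_pow_left₀ (Nat.cast_nonneg j) hjk d'
          exact mul_le_mul_of_nonneg_right
            (mul_le_mul_of_nonneg_left hpw hC.le) (pow_pos hθ0 j).le
      _ = C * (k : ℝ) ^ d' * (∑ j ∈ Finset.range k, θ' ^ j) + (k : ℝ) := by
          rw [Finset.mul_sum]
      _ ≤ C * (k : ℝ) ^ d' * (θ' ^ k / (θ' - 1)) + (k : ℝ) := by
          have hS : (∑ j ∈ Finset.range k, θ' ^ j) ≤ θ' ^ k / (θ' - 1) := by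
            rw [geom_sum_eq (ne_of_gt hθ') k]
            exact (div_le_div_iff_of_pos_right (by linarith)).2 (by linarith)
          exact add_le_add_left
            (mul_le_mul_of_nonneg_left hS (by positivity)) _
      _ = (C / (θ' - 1)) * (k : ℝ) ^ d' * θ' ^ k + (k : ℝ) := by ring
  have hC' : (0 : ℝ) ≤ C / (θ' - 1) := by
    apply div_nonneg hC.le
    linarith
  have hg1 := core_tendsto d' e θ' Θ (C / (θ' - 1)) hθ'.le hΘ hC' hlt
  have hg2 : Tendsto (fun k : ℕ => (k : ℝ) / ((k : ℝ) ^ e * Θ ^ k)) atTop (𝓝 0) := by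
    have := core_tendsto 1 e 1 Θ 1 le_rfl hΘ zero_le_one (Or.inl hΘ)
    simpa using this
  refine squeeze_zero' ?_ ?_ (by simpa using hg1.add hg2)
  · filter_upwards with k
    have : (0 : ℝ) ≤ ∑ j ∈ Finset.range k, (((applyMorph φ)^[j] [b]).length : ℝ) :=
      Finset.sum_nonneg fun j _ => by positivity
    positivity
  · filter_upwards [eventually_ge_atTop 1] with k hk
    have hk0 : (0 : ℝ) < (k : ℝ) := by exact_mod_cast hk
    have hr : (0 : ℝ) < (k : ℝ) ^ e * Θ ^ k := by positivity
    have h1 := hsum k hk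
    calc (∑ j ∈ Finset.range k, (((applyMorph φ)^[j] [b]).length : ℝ)) / ((k : ℝ) ^ e * Θ ^ k)
        ≤ ((C / (θ' - 1)) * (k : ℝ) ^ d' * θ' ^ k + (k : ℝ)) / ((k : ℝ) ^ e * Θ ^ k) := by
          gcongr
      _ = (C / (θ' - 1)) * (k : ℝ) ^ d' * θ' ^ k / ((k : ℝ) ^ e * Θ ^ k)
            + (k : ℝ) / ((k : ℝ) ^ e * Θ ^ k) := by
          rw [add_div]

lemma list_small_tendsto {φ : A → List A} {e : ℕ} {Θ : ℝ} (hΘ : 1 < Θ)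
    (q : List A) (hq : ∀ b ∈ q, SmallBound φ e Θ b) :
    Tendsto (fun k : ℕ => (((applyMorph φ)^[k] q).length : ℝ) / ((k : ℝ) ^ e * Θ ^ k))
      atTop (𝓝 0) := by
  induction q with
  | nil =>
      have : (fun k : ℕ => (((applyMorph φ)^[k] ([] : List A)).length : ℝ)
          / ((k : ℝ) ^ e * Θ ^ k)) = fun _ => (0 : ℝ) := by
        funext k
        simp [iter_nil]
      rw [this]
      exact tendsto_const_nhds
  | cons b q ih =>
      have h1 := smallBound_tendsto hΘ (hq b (by simp))
      have h2 := ih fun b' hb' => hq b' (by simp [hb'])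
      have h3 : Tendsto (fun k : ℕ => (((applyMorph φ)^[k] [b]).length : ℝ) / ((k : ℝ) ^ e * Θ ^ k)
          + (((applyMorph φ)^[k] q).length : ℝ) / ((k : ℝ) ^ e * Θ ^ k)) atTop (𝓝 0) := by
        simpa using h1.add h2
      refine h3.congr fun k => ?_
      have e1 : (((applyMorph φ)^[k] (b :: q)).length : ℝ)
          = (((applyMorph φ)^[k] [b]).length : ℝ) + (((applyMorph φ)^[k] q).length : ℝ) := by
        rw [iter_length_cons φ k b q]
        push_cast
        ring
      rw [e1, add_div]

lemma list_small_sum_tendsto {φ : A → List A} {e : ℕ} {Θ : ℝ} (hΘ : 1 < Θ)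
    (q : List A) (hq : ∀ b ∈ q, SmallBound φ e Θ b) :
    Tendsto (fun k : ℕ =>
      (∑ j ∈ Finset.range k, (((applyMorph φ)^[j] q).length : ℝ)) / ((k : ℝ) ^ e * Θ ^ k))
      atTop (𝓝 0) := by
  induction q with
  | nil =>
      have : (fun k : ℕ => (∑ j ∈ Finset.range k,
          (((applyMorph φ)^[j] ([] : List A)).length : ℝ)) / ((k : ℝ) ^ e * Θ ^ k))
          = fun _ => (0 : ℝ) := by
        funext k
        simp [iter_nil]
      rw [this]
      exact tendsto_const_nhds
  | cons b q ih =>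
      have h1 := smallBound_sum_tendsto hΘ (hq b (by simp))
      have h2 := ih fun b' hb' => hq b' (by simp [hb'])
      have h3 : Tendsto (fun k : ℕ =>
          (∑ j ∈ Finset.range k, (((applyMorph φ)^[j] [b]).length : ℝ)) / ((k : ℝ) ^ e * Θ ^ k)
          + (∑ j ∈ Finset.range k, (((applyMorph φ)^[j] q).length : ℝ)) / ((k : ℝ) ^ e * Θ ^ k))
          atTop (𝓝 0) := by
        simpa using h1.add h2
      refine h3.congr fun k => ?_
      have : ∀ j : ℕ, (((applyMorph φ)^[j] (b :: q)).length : ℝ)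
          = (((applyMorph φ)^[j] [b]).length : ℝ) + (((applyMorph φ)^[j] q).length : ℝ) := by
        intro j
        rw [iter_length_cons φ j b q]
        push_cast
        ring
      rw [← add_div, ← Finset.sum_add_distrib]
      congr 1
      exact (Finset.sum_congr rfl fun j _ => (this j).symm)

lemma no_small_all {c : ℝ} (hc : 0 < c) {f : ℕ → ℝ}
    (h0 : Tendsto f atTop (𝓝 0)) (hlb : ∀ k : ℕ, 1 ≤ k → c ≤ f k) : False := by
  have h1 : ∀ᶠ k in atTop, f k < c := h0.eventually_lt_const hc
  obtain ⟨k, hk1, hk2⟩ := ((eventually_ge_atTop 1).and h1).exists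
  exact absurd (hlb k hk1) (not_le.2 hk2)

lemma big_letter_in_iter {φ : A → List A} {e : ℕ} {Θ : ℝ} (hΘ : 1 < Θ)
    {a : A} {c : ℝ} (hc : 0 < c)
    (hlb : ∀ n : ℕ, 1 ≤ n → c * (n : ℝ) ^ e * Θ ^ n ≤ (((applyMorph φ)^[n] [a]).length : ℝ))
    (k : ℕ) (hall : ∀ b ∈ (applyMorph φ)^[k] [a], SmallBound φ e Θ b) : False := by
  have hΘ0 : (0 : ℝ) < Θ := lt_trans one_pos hΘ
  have h0 := list_small_tendsto hΘ ((applyMorph φ)^[k] [a]) hall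
  refine no_small_all hc h0 fun t ht => ?_
  have ht0 : (0 : ℝ) < (t : ℝ) := by exact_mod_cast ht
  have hlen : (applyMorph φ)^[t] ((applyMorph φ)^[k] [a]) = (applyMorph φ)^[t + k] [a] := by
    rw [← Function.iterate_add_apply]
  rw [le_div_iff₀ (by positivity)]
  have htk : (t : ℝ) ≤ ((t + k : ℕ) : ℝ) := by
    push_cast
    linarith [Nat.cast_nonneg (α := ℝ) k]
  calc c * ((t : ℝ) ^ e * Θ ^ t) = c * (t : ℝ) ^ e * Θ ^ t := by ring
    _ ≤ c * ((t + k : ℕ) : ℝ) ^ e * Θ ^ (t + k) := by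
        push_cast
        gcongr <;>
          first
            | exact hΘ.le
            | omega
            | positivity
            | linarith [Nat.cast_nonneg (α := ℝ) k]
    _ ≤ (((applyMorph φ)^[t + k] [a]).length : ℝ) := hlb (t + k) (le_trans ht (Nat.le_add_right t k))
    _ = (((applyMorph φ)^[t] ((applyMorph φ)^[k] [a])).length : ℝ) := by rw [hlen]

end MaxGrowthAux

open Filter Topology in
/-- the fixed point contains infinitely many occurrences of letters
of maximal growth order. -/
theorem infinitely_many_maximal_growth_letters {A : Type*} [Fintype A]
    (φ : A → List A) (a₁ : A) (hne : Nonerasing φ) (hpro : Prolongable φ a₁)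
    (X : ℕ → A) (hX : IsFixedPoint φ a₁ X)
    (hocc : ∀ a : A, ∃ n : ℕ, X n = a)
    (hgrow : ∀ a : A, GrowingLetter φ a)
    (d : A → ℕ) (θ : A → ℝ) (hθ : ∀ a : A, 1 < θ a)
    (hord : ∀ a : A, HasGrowthOrder φ a (d a) (θ a))
    (D : ℕ) (Θ : ℝ)
    (hmem : ∃ a : A, d a = D ∧ θ a = Θ)
    (hmax : ∀ a : A, θ a < Θ ∨ (θ a = Θ ∧ d a ≤ D)) :
    {n : ℕ | d (X n) = D ∧ θ (X n) = Θ}.Infinite := by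
  classical
  obtain ⟨a₀, hd₀, hθ₀⟩ := hmem
  have hΘ1 : (1 : ℝ) < Θ := hθ₀ ▸ hθ a₀
  have hΘ0 : (0 : ℝ) < Θ := lt_trans one_pos hΘ1
  -- X 0 = a₁
  have hX0 : X 0 = a₁ := by
    have h := (hX 0) 0 (by simp)
    simpa using h
  -- non-maximal letters have a small bound
  have hsmall : ∀ b : A, ¬(d b = D ∧ θ b = Θ) → MaxGrowthAux.SmallBound φ D Θ b := by
    intro b hb
    obtain ⟨hθb, c, C, hc, hcC, hbd⟩ := hord b
    refine ⟨d b, θ b, C, hθ b, lt_of_lt_of_le hc hcC, ?_, fun k hk => (hbd k hk).2⟩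
    rcases hmax b with h | ⟨h1, h2⟩
    · exact Or.inl h
    · exact Or.inr ⟨h1, lt_of_le_of_ne h2 fun hdb => hb ⟨hdb, h1⟩⟩
  -- maximal letters have the full lower bound
  have hbig : ∀ b : A, d b = D → θ b = Θ → ∃ c : ℝ, 0 < c ∧ ∀ n : ℕ, 1 ≤ n →
      c * (n : ℝ) ^ D * Θ ^ n ≤ (((applyMorph φ)^[n] [b]).length : ℝ) := by
    intro b h1 h2
    obtain ⟨hθb, c, C, hc, hcC, hbd⟩ := hord b
    refine ⟨c, hc, fun n hn => ?_⟩
    have h3 := (hbd n hn).1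
    rw [h1, h2] at h3
    exact h3
  -- Step 1: a maximal letter occurs at a position ≥ 1
  have step1 : ∃ m : ℕ, 1 ≤ m ∧ d (X m) = D ∧ θ (X m) = Θ := by
    by_contra hcon
    have hsm : ∀ m : ℕ, 1 ≤ m → MaxGrowthAux.SmallBound φ D Θ (X m) := by
      intro m hm
      apply hsmall
      intro hb
      exact hcon ⟨m, hm, hb.1, hb.2⟩
    obtain ⟨n₀, hn₀⟩ := hocc a₀
    have hn₀0 : n₀ = 0 := by
      by_contra h
      exact hcon ⟨n₀, Nat.one_le_iff_ne_zero.2 h, by rw [hn₀, hd₀], by rw [hn₀, hθ₀]⟩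
    have ha : a₁ = a₀ := by rw [← hX0, ← hn₀, hn₀0]
    obtain ⟨c, hc, hlb⟩ := hbig a₁ (by rw [ha, hd₀]) (by rw [ha, hθ₀])
    obtain ⟨v, hv, -⟩ := hpro
    -- the prefix a₁ :: v of X
    have hpre1 : PrefixOf (a₁ :: v) X := by
      have h := hX 1
      rwa [MaxGrowthAux.iter_one, hv] at h
    have hvsmall : ∀ b ∈ v, MaxGrowthAux.SmallBound φ D Θ b := by
      intro b hb
      obtain ⟨i, hi, hbi⟩ := List.mem_iff_getElem.1 hb
      have hXi : X (i + 1) = b := by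
        have h2 := MaxGrowthAux.prefixOf_get hpre1
          (j := i + 1) (by simpa using Nat.succ_lt_succ hi)
        rw [h2]
        simpa using hbi
      exact hXi ▸ hsm (i + 1) (Nat.le_add_left 1 i)
    -- length recurrence
    have hrec : ∀ k : ℕ, (((applyMorph φ)^[k] [a₁]).length : ℕ)
        = 1 + ∑ j ∈ Finset.range k, ((applyMorph φ)^[j] v).length := by
      intro k
      induction k with
      | zero => simp
      | succ k ih =>
          have hsplit : (applyMorph φ)^[k + 1] [a₁]
              = (applyMorph φ)^[k] [a₁] ++ (applyMorph φ)^[k] v := by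
            rw [Function.iterate_succ_apply]
            have h : applyMorph φ [a₁] = a₁ :: v := by simp [applyMorph, hv]
            rw [h]
            exact MaxGrowthAux.iter_cons φ k a₁ v
          rw [hsplit, List.length_append, ih, Finset.sum_range_succ, add_assoc]
    have hsumt := MaxGrowthAux.list_small_sum_tendsto (φ := φ) hΘ1 v hvsmall
    have hone : Tendsto (fun k : ℕ => (1 : ℝ) / ((k : ℝ) ^ D * Θ ^ k)) atTop (𝓝 0) := by
      have := MaxGrowthAux.core_tendsto 0 D 1 Θ 1 le_rfl hΘ1 zero_le_one (Or.inl hΘ1)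
      simpa using this
    have hLt : Tendsto (fun k : ℕ =>
        ((((applyMorph φ)^[k] [a₁]).length : ℝ)) / ((k : ℝ) ^ D * Θ ^ k)) atTop (𝓝 0) := by
      have h3 : Tendsto (fun k : ℕ => (1 : ℝ) / ((k : ℝ) ^ D * Θ ^ k)
          + (∑ j ∈ Finset.range k, (((applyMorph φ)^[j] v).length : ℝ)) / ((k : ℝ) ^ D * Θ ^ k))
          atTop (𝓝 0) := by
        simpa using hone.add hsumt
      refine h3.congr fun k => ?_
      have h := hrec k
      have h2 : (((applyMorph φ)^[k] [a₁]).length : ℝ)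
          = 1 + ∑ j ∈ Finset.range k, (((applyMorph φ)^[j] v).length : ℝ) := by
        rw [h]
        push_cast
        ring
      rw [h2, add_div]
    refine MaxGrowthAux.no_small_all hc hLt fun k hk => ?_
    have hk0 : (0 : ℝ) < (k : ℝ) := by exact_mod_cast hk
    rw [le_div_iff₀ (by positivity)]
    calc c * ((k : ℝ) ^ D * Θ ^ k) = c * (k : ℝ) ^ D * Θ ^ k := by ring
      _ ≤ _ := hlb k hk
  -- Step 2: produce maximal letters at arbitrarily large positions
  obtain ⟨m, hm1, hmD, hmΘ⟩ := step1
  obtain ⟨c, hc, hlb⟩ := hbig (X m) hmD hmΘ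
  apply Set.infinite_of_forall_exists_gt
  intro N
  obtain ⟨k, hk⟩ := hgrow a₁ (N + 1)
  have hbigk : ∃ b ∈ (applyMorph φ)^[k] [X m], d b = D ∧ θ b = Θ := by
    by_contra hno
    refine MaxGrowthAux.big_letter_in_iter hΘ1 hc hlb k fun b hb => hsmall b fun hP => ?_
    exact hno ⟨b, hb, hP⟩
  obtain ⟨b, hbmem, hbD, hbΘ⟩ := hbigk
  obtain ⟨j, hj, hjb⟩ := List.mem_iff_getElem.1 hbmem
  obtain ⟨n₁, hn₁⟩ := hgrow a₁ (m + 1)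
  have hP : (List.range (m + 1)).map X <+: (applyMorph φ)^[n₁] [a₁] :=
    MaxGrowthAux.rangeMap_prefix (hX n₁) (by simpa using hn₁)
  have hPk : PrefixOf ((applyMorph φ)^[k] ((List.range (m + 1)).map X)) X := by
    have h2 := MaxGrowthAux.iter_prefix φ k hP
    rw [← Function.iterate_add_apply] at h2
    exact MaxGrowthAux.prefixOf_mono (hX (k + n₁)) h2
  have hdecomp : (applyMorph φ)^[k] ((List.range (m + 1)).map X)
      = (applyMorph φ)^[k] ((List.range m).map X) ++ (applyMorph φ)^[k] [X m] := by
    rw [List.range_succ, List.map_append, MaxGrowthAux.iter_append]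
    rfl
  set s := ((applyMorph φ)^[k] ((List.range m).map X)).length with hs
  have hlenlt : s + j < ((applyMorph φ)^[k] ((List.range (m + 1)).map X)).length := by
    rw [hdecomp, List.length_append]
    omega
  have hXval : X (s + j) = b := by
    have h4 := MaxGrowthAux.prefixOf_get hPk hlenlt
    rw [h4]
    have h5 : ((applyMorph φ)^[k] ((List.range (m + 1)).map X))[s + j]'hlenlt
        = ((applyMorph φ)^[k] [X m])[(s + j) - s]'(by omega) := by
      simp only [hdecomp]
      exact List.getElem_append_right (by omega)
    rw [h5]
    have h6 : s + j - s = j := by omega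
    simp only [h6]
    exact hjb
  refine ⟨s + j, ?_, ?_⟩
  · simp only [Set.mem_setOf_eq, hXval]
    exact ⟨hbD, hbΘ⟩
  · -- N < s + j
    have h1k : [X 0] <+: (List.range m).map X := by
      have h0 : PrefixOf ((List.range m).map X) X := by
        intro i hi
        simp
      have h1 := MaxGrowthAux.rangeMap_prefix (m := 1) h0 (by simpa using hm1)
      simpa using h1
    have hle := (MaxGrowthAux.iter_prefix φ k h1k).length_le
    rw [hX0] at hle
    omega
end

section
/- Let φ be a nonerasing substitution on a nonempty finite alphabet A and suppose every letter a has a growth order (d a, θ a). Then the growth orders of all letters are equal (i.e., (d a, θ a) = (d b, θ b) for all a b : A) if and only if the growth orders of all recurrent letters are equal (i.e., (d a, θ a) = (d b, θ b) for all recurrent a b : A). -/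
open Filter Topology

namespace GOaux

variable {A : Type*}

lemma applyMorph_append {B : Type*} (φ : A → List B) (u v : List A) :
    applyMorph φ (u ++ v) = applyMorph φ u ++ applyMorph φ v := by
  simp [applyMorph]

lemma iter_append (φ : A → List A) (n : ℕ) (u v : List A) :
    (applyMorph φ)^[n] (u ++ v) = (applyMorph φ)^[n] u ++ (applyMorph φ)^[n] v := by
  induction n generalizing u v with
  | zero => simp
  | succ n ih => simp [Function.iterate_succ_apply, applyMorph_append, ih]

lemma applyMorph_singleton (φ : A → List A) (a : A) : applyMorph φ [a] = φ a := by
  simp [applyMorph]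

lemma iter_succ_singleton (φ : A → List A) (n : ℕ) (a : A) :
    (applyMorph φ)^[n+1] [a] = (applyMorph φ)^[n] (φ a) := by
  rw [Function.iterate_succ_apply, applyMorph_singleton]

lemma mem_iter_succ (φ : A → List A) {m : ℕ} {a b x : A}
    (hb : b ∈ (applyMorph φ)^[m] [a]) (hx : x ∈ φ b) :
    x ∈ (applyMorph φ)^[m+1] [a] := by
  rw [Function.iterate_succ_apply']
  simp only [applyMorph, List.mem_flatten]
  exact ⟨φ b, List.mem_map_of_mem hb, hx⟩

lemma length_le_of_mem (φ : A → List A) {w : List A} {b : A} (hb : b ∈ w) (n : ℕ) :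
    ((applyMorph φ)^[n] [b]).length ≤ ((applyMorph φ)^[n] w).length := by
  obtain ⟨s, t, rfl⟩ := List.append_of_mem hb
  rw [show s ++ b :: t = s ++ ([b] ++ t) by simp, iter_append, iter_append]
  simp only [List.length_append]
  omega

lemma iter_nil (φ : A → List A) (n : ℕ) : (applyMorph φ)^[n] ([] : List A) = [] := by
  induction n with
  | zero => rfl
  | succ n ih => rw [Function.iterate_succ_apply, show applyMorph φ [] = [] from rfl, ih]

lemma iter_eq_flatten (φ : A → List A) (n : ℕ) (w : List A) :
    (applyMorph φ)^[n] w = (w.map (fun x => (applyMorph φ)^[n] [x])).flatten := by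
  induction w with
  | nil => simp [iter_nil]
  | cons x w' ih =>
    rw [show x :: w' = [x] ++ w' from rfl, iter_append, ih]
    simp

lemma length_iter_succ (φ : A → List A) (n : ℕ) (a : A) :
    (((applyMorph φ)^[n+1] [a]).length : ℝ) =
      ((φ a).map (fun x => (((applyMorph φ)^[n] [x]).length : ℝ))).sum := by
  rw [iter_succ_singleton, iter_eq_flatten, List.length_flatten, List.map_map,
    Nat.cast_list_sum, List.map_map]
  rfl

end GOaux
namespace GOaux

lemma list_sum_tendsto_zero {ι : Type*} (l : List ι) (f : ι → ℕ → ℝ)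
    (h : ∀ x ∈ l, Tendsto (f x) atTop (𝓝 0)) :
    Tendsto (fun n => (l.map (fun x => f x n)).sum) atTop (𝓝 0) := by
  induction l with
  | nil => simpa using tendsto_const_nhds
  | cons x l ih =>
    have := (h x List.mem_cons_self).add (ih fun y hy => h y (List.mem_cons_of_mem x hy))
    simpa using this

lemma lex_le {d d' : ℕ} {θ θ' c C : ℝ} (hθ : 1 ≤ θ) (hθ' : 1 ≤ θ') (hc : 0 < c)
    (h : ∀ n : ℕ, 1 ≤ n → c * (n:ℝ)^d * θ^n ≤ C * (n:ℝ)^d' * θ'^n) :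
    θ ≤ θ' ∧ (θ = θ' → d ≤ d') := by
  have hθpos : (0:ℝ) < θ := zero_lt_one.trans_le hθ
  constructor
  · by_contra hlt
    push_neg at hlt
    have hr0 : 0 ≤ θ'/θ := div_nonneg (zero_le_one.trans hθ') hθpos.le
    have hr1 : θ'/θ < 1 := (div_lt_one hθpos).mpr hlt
    have h0 : Tendsto (fun n : ℕ => C * ((n:ℝ)^d' * (θ'/θ)^n)) atTop (𝓝 0) := by
      simpa using (tendsto_pow_const_mul_const_pow_of_lt_one d' hr0 hr1).const_mul C
    have hev : ∀ᶠ n : ℕ in atTop, C * ((n:ℝ)^d' * (θ'/θ)^n) < c :=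
      h0.eventually_lt_const hc
    obtain ⟨n, hn1, hnlt⟩ := ((eventually_ge_atTop 1).and hev).exists
    have hn1' : (1:ℝ) ≤ (n:ℝ) := by exact_mod_cast hn1
    have hnd : (1:ℝ) ≤ (n:ℝ)^d := one_le_pow₀ hn1'
    have hpn : (0:ℝ) < θ^n := pow_pos hθpos n
    have h2 : c * θ^n ≤ C * (n:ℝ)^d' * θ'^n := by
      calc c * θ^n = c * 1 * θ^n := by ring
        _ ≤ c * (n:ℝ)^d * θ^n :=
          mul_le_mul_of_nonneg_right (mul_le_mul_of_nonneg_left hnd hc.le) hpn.le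
        _ ≤ _ := h n hn1
    have h3 : c ≤ C * ((n:ℝ)^d' * (θ'/θ)^n) := by
      rw [div_pow, show C * ((n:ℝ)^d' * (θ'^n/θ^n)) = C * (n:ℝ)^d' * θ'^n / θ^n by ring,
        le_div_iff₀ hpn]
      exact h2
    linarith
  · intro heq
    subst heq
    by_contra hdd
    push_neg at hdd
    obtain ⟨n0, hn0⟩ := exists_nat_gt (C/c)
    set n := max n0 1 with hn
    have hn1 : 1 ≤ n := le_max_right _ _
    have hn1' : (1:ℝ) ≤ (n:ℝ) := by exact_mod_cast hn1
    have hCn : C < c * n := by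
      have : (n0:ℝ) ≤ (n:ℝ) := by exact_mod_cast le_max_left n0 1
      have := (div_lt_iff₀ hc).mp (hn0.trans_le this)
      linarith
    have hpow : (n:ℝ)^d' * (n:ℝ) ≤ (n:ℝ)^d := by
      rw [← pow_succ]
      exact pow_le_pow_right₀ hn1' hdd
    have hpn : (0:ℝ) < θ^n := pow_pos hθpos n
    have hP : (0:ℝ) < (n:ℝ)^d' * θ^n := by positivity
    have key : c * (n:ℝ) * ((n:ℝ)^d' * θ^n) ≤ C * ((n:ℝ)^d' * θ^n) := by
      calc c * (n:ℝ) * ((n:ℝ)^d' * θ^n) = c * ((n:ℝ)^d' * (n:ℝ)) * θ^n := by ring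
        _ ≤ c * (n:ℝ)^d * θ^n :=
          mul_le_mul_of_nonneg_right (mul_le_mul_of_nonneg_left hpow hc.le) hpn.le
        _ ≤ C * (n:ℝ)^d' * θ^n := h n hn1
        _ = C * ((n:ℝ)^d' * θ^n) := by ring
    have := le_of_mul_le_mul_right key hP
    linarith

end GOaux
namespace GOaux

lemma exists_child (φ : A → List A) (d : A → ℕ) (θ : A → ℝ)
    (hord : ∀ a : A, HasGrowthOrder φ a (d a) (θ a)) (a : A) :
    ∃ x ∈ φ a, d x = d a ∧ θ x = θ a := by
  by_contra hcon
  push_neg at hcon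
  choose c C hc hcC hbd using fun x => (hord x).2
  have hθ1 : ∀ x, 1 ≤ θ x := fun x => (hord x).1
  have hθpos : ∀ x, (0:ℝ) < θ x := fun x => zero_lt_one.trans_le (hθ1 x)
  have hCpos : ∀ x, (0:ℝ) < C x := fun x => (hc x).trans_le (hcC x)
  set K : ℝ := C a * θ a * 2 ^ (d a) with hK
  -- Step 1: each letter of φ a has strictly smaller growth order (lexicographically).
  have hlt : ∀ x ∈ φ a, θ x < θ a ∨ (θ x = θ a ∧ d x < d a) := by
    intro x hx
    have hchain : ∀ n : ℕ, 1 ≤ n →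
        c x * (n:ℝ)^(d x) * (θ x)^n ≤ K * (n:ℝ)^(d a) * (θ a)^n := by
      intro n hn
      have hn1' : (1:ℝ) ≤ (n:ℝ) := by exact_mod_cast hn
      have h1 := (hbd x n hn).1
      have hlen : (((applyMorph φ)^[n] [x]).length : ℝ) ≤
          (((applyMorph φ)^[n+1] [a]).length : ℝ) := by
        rw [iter_succ_singleton]
        exact_mod_cast length_le_of_mem φ hx n
      have h2 := (hbd a (n+1) (by omega)).2
      push_cast at h2
      have hle : ((n:ℝ)+1)^(d a) ≤ 2^(d a) * (n:ℝ)^(d a) := by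
        rw [← mul_pow]
        exact pow_le_pow_left₀ (by linarith) (by linarith) _
      have hstep : C a * ((n:ℝ)+1)^(d a) * (θ a)^(n+1) ≤ K * (n:ℝ)^(d a) * (θ a)^n := by
        calc C a * ((n:ℝ)+1)^(d a) * (θ a)^(n+1)
            ≤ C a * (2^(d a) * (n:ℝ)^(d a)) * (θ a)^(n+1) :=
              mul_le_mul_of_nonneg_right
                (mul_le_mul_of_nonneg_left hle (hCpos a).le)
                (pow_nonneg (hθpos a).le _)
          _ = K * (n:ℝ)^(d a) * (θ a)^n := by rw [hK, pow_succ]; ring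
      calc c x * (n:ℝ)^(d x) * (θ x)^n ≤ _ := h1
        _ ≤ (((applyMorph φ)^[n+1] [a]).length : ℝ) := hlen
        _ ≤ C a * ((n:ℝ)+1)^(d a) * (θ a)^(n+1) := h2
        _ ≤ K * (n:ℝ)^(d a) * (θ a)^n := hstep
    obtain ⟨hle1, hle2⟩ := lex_le (hθ1 x) (hθ1 a) (hc x) hchain
    rcases lt_or_eq_of_le hle1 with h | h
    · exact Or.inl h
    · refine Or.inr ⟨h, lt_of_le_of_ne (hle2 h) ?_⟩
      intro hd
      exact hcon x hx hd h
  -- Step 2: derive a contradiction.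
  set D : ℕ → ℝ := fun n => (n:ℝ)^(d a) * (θ a)^n with hDdef
  have hD : ∀ n : ℕ, 1 ≤ n → 0 < D n := by
    intro n hn
    have : (0:ℝ) < (n:ℝ) := by exact_mod_cast hn
    have := hθpos a
    positivity
  set g : A → ℕ → ℝ := fun x n => (C x * (n:ℝ)^(d x) * (θ x)^n) / D n with hgdef
  have hg : ∀ x ∈ φ a, Tendsto (g x) atTop (𝓝 0) := by
    intro x hx
    have hnumnn : ∀ n : ℕ, 0 ≤ C x * (n:ℝ)^(d x) * (θ x)^n := fun n =>
      mul_nonneg (mul_nonneg (hCpos x).le (by positivity)) (pow_nonneg (hθpos x).le _)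
    rcases hlt x hx with hcase | ⟨heq, hdlt⟩
    · have hr0 : 0 ≤ θ x / θ a := div_nonneg (hθpos x).le (hθpos a).le
      have hr1 : θ x / θ a < 1 := (div_lt_one (hθpos a)).mpr hcase
      have hup : Tendsto (fun n : ℕ => C x * ((n:ℝ)^(d x) * (θ x / θ a)^n)) atTop (𝓝 0) := by
        simpa using (tendsto_pow_const_mul_const_pow_of_lt_one (d x) hr0 hr1).const_mul (C x)
      apply tendsto_of_tendsto_of_tendsto_of_le_of_le' tendsto_const_nhds hup
      · filter_upwards [eventually_ge_atTop 1] with n hn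
        exact div_nonneg (hnumnn n) (hD n hn).le
      · filter_upwards [eventually_ge_atTop 1] with n hn
        have hn1' : (1:ℝ) ≤ (n:ℝ) := by exact_mod_cast hn
        have hθan : (0:ℝ) < (θ a)^n := pow_pos (hθpos a) n
        have hDge : (θ a)^n ≤ D n := by
          rw [hDdef]
          calc (θ a)^n = 1 * (θ a)^n := (one_mul _).symm
            _ ≤ (n:ℝ)^(d a) * (θ a)^n :=
              mul_le_mul_of_nonneg_right (one_le_pow₀ hn1') hθan.le
        calc g x n ≤ (C x * (n:ℝ)^(d x) * (θ x)^n) / (θ a)^n :=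
              div_le_div_of_nonneg_left (hnumnn n) hθan hDge
          _ = C x * ((n:ℝ)^(d x) * (θ x / θ a)^n) := by rw [div_pow]; ring
    · have hup : Tendsto (fun n : ℕ => C x / (n:ℝ)) atTop (𝓝 0) := by
        simpa using tendsto_const_div_pow (C x) 1 one_ne_zero
      apply tendsto_of_tendsto_of_tendsto_of_le_of_le' tendsto_const_nhds hup
      · filter_upwards [eventually_ge_atTop 1] with n hn
        exact div_nonneg (hnumnn n) (hD n hn).le
      · filter_upwards [eventually_ge_atTop 1] with n hn
        have hn1' : (1:ℝ) ≤ (n:ℝ) := by exact_mod_cast hn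
        have hnpos : (0:ℝ) < (n:ℝ) := by linarith
        have hpow : (n:ℝ)^(d x) * (n:ℝ) ≤ (n:ℝ)^(d a) := by
          rw [← pow_succ]
          exact pow_le_pow_right₀ hn1' hdlt
        rw [hgdef, div_le_div_iff₀ (hD n hn) hnpos]
        calc C x * (n:ℝ)^(d x) * (θ x)^n * (n:ℝ)
            = C x * ((n:ℝ)^(d x) * (n:ℝ)) * (θ x)^n := by ring
          _ ≤ C x * (n:ℝ)^(d a) * (θ x)^n :=
            mul_le_mul_of_nonneg_right
              (mul_le_mul_of_nonneg_left hpow (hCpos x).le)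
              (pow_nonneg (hθpos x).le _)
          _ = C x * D n := by rw [hDdef, heq]; ring
  have hT : Tendsto (fun n => ((φ a).map (fun x => g x n)).sum) atTop (𝓝 0) :=
    list_sum_tendsto_zero _ _ hg
  have hlow : ∀ n : ℕ, 1 ≤ n → c a ≤ ((φ a).map (fun x => g x n)).sum := by
    intro n hn
    have hDn := hD n hn
    have hn1' : (1:ℝ) ≤ (n:ℝ) := by exact_mod_cast hn
    have hsum : ((φ a).map (fun x => g x n)).sum * D n =
        ((φ a).map (fun x => C x * (n:ℝ)^(d x) * (θ x)^n)).sum := by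
      rw [← List.sum_map_mul_right]
      congr 1
      apply List.map_congr_left
      intro x _
      exact div_mul_cancel₀ _ hDn.ne'
    have hup2 : (((applyMorph φ)^[n+1] [a]).length : ℝ) ≤
        ((φ a).map (fun x => C x * (n:ℝ)^(d x) * (θ x)^n)).sum := by
      rw [length_iter_succ]
      exact List.sum_le_sum fun x _ => (hbd x n hn).2
    have hlo := (hbd a (n+1) (by omega)).1
    push_cast at hlo
    have hmono : c a * (n:ℝ)^(d a) * (θ a)^n ≤ c a * ((n:ℝ)+1)^(d a) * (θ a)^(n+1) := by
      have h1 : (n:ℝ)^(d a) ≤ ((n:ℝ)+1)^(d a) := pow_le_pow_left₀ (by linarith) (by linarith) _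
      have h2 : (θ a)^n ≤ (θ a)^(n+1) := pow_le_pow_right₀ (hθ1 a) (by omega)
      have := mul_le_mul (mul_le_mul_of_nonneg_left h1 (hc a).le) h2
        (pow_nonneg (hθpos a).le n) (mul_nonneg (hc a).le (by positivity))
      linarith
    have hfinal : c a * D n ≤ ((φ a).map (fun x => g x n)).sum * D n := by
      rw [hsum, hDdef]
      calc c a * ((n:ℝ)^(d a) * (θ a)^n) = c a * (n:ℝ)^(d a) * (θ a)^n := by ring
        _ ≤ c a * ((n:ℝ)+1)^(d a) * (θ a)^(n+1) := hmono
        _ ≤ (((applyMorph φ)^[n+1] [a]).length : ℝ) := hlo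
        _ ≤ _ := hup2
    exact le_of_mul_le_mul_right hfinal hDn
  obtain ⟨n, hn1, hlt'⟩ := ((eventually_ge_atTop 1).and (hT.eventually_lt_const (hc a))).exists
  exact absurd (hlow n hn1) (not_le.mpr hlt')

end GOaux
namespace GOaux

lemma exists_recurrent_same {A : Type*} [Fintype A] (φ : A → List A)
    (d : A → ℕ) (θ : A → ℝ)
    (hord : ∀ a : A, HasGrowthOrder φ a (d a) (θ a)) (a : A) :
    ∃ r : A, RecurrentLetter φ r ∧ d r = d a ∧ θ r = θ a := by
  choose f hf1 hf2 hf3 using fun b => exists_child φ d θ hord b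
  have hiter : ∀ (m : ℕ) (b : A), d (f^[m] b) = d b ∧ θ (f^[m] b) = θ b := by
    intro m
    induction m with
    | zero => simp
    | succ m ih =>
      intro b
      rw [Function.iterate_succ_apply']
      exact ⟨(hf2 _).trans (ih b).1, (hf3 _).trans (ih b).2⟩
  have hmem : ∀ (m : ℕ) (b : A), f^[m] b ∈ (applyMorph φ)^[m] [b] := by
    intro m b
    induction m with
    | zero => simp
    | succ m ih =>
      rw [Function.iterate_succ_apply' f m b]
      exact mem_iter_succ φ ih (hf1 _)
  obtain ⟨i, j, hlt, heq⟩ : ∃ i j : ℕ, i < j ∧ f^[i] a = f^[j] a := by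
    obtain ⟨i, j, hij, heq⟩ := Fintype.exists_ne_map_eq_of_card_lt
      (fun i : Fin (Fintype.card A + 1) => f^[(i : ℕ)] a) (by simp)
    rcases (Fin.val_ne_iff.mpr hij).lt_or_gt with h | h
    · exact ⟨i, j, h, heq⟩
    · exact ⟨j, i, h, heq.symm⟩
  refine ⟨f^[i] a, ⟨j - i, by omega, ?_⟩, (hiter i a).1, (hiter i a).2⟩
  have h1 : f^[j - i] (f^[i] a) = f^[i] a := by
    rw [← Function.iterate_add_apply, show j - i + i = j by omega]
    exact heq.symm
  have := hmem (j - i) (f^[i] a)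
  rwa [h1] at this

end GOaux

/-- all letters have equal growth orders iff all recurrent letters
have equal growth orders. -/
theorem growth_orders_equal_iff_recurrent {A : Type*} [Fintype A] [Nonempty A]
    (φ : A → List A) (hne : Nonerasing φ)
    (d : A → ℕ) (θ : A → ℝ)
    (hord : ∀ a : A, HasGrowthOrder φ a (d a) (θ a)) :
    (∀ a b : A, d a = d b ∧ θ a = θ b) ↔
    (∀ a b : A, RecurrentLetter φ a → RecurrentLetter φ b →
      d a = d b ∧ θ a = θ b) := by
  constructor
  · intro h a b _ _
    exact h a b
  · intro h a b
    obtain ⟨ra, hra, hda, hθa⟩ := GOaux.exists_recurrent_same φ d θ hord a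
    obtain ⟨rb, hrb, hdb, hθb⟩ := GOaux.exists_recurrent_same φ d θ hord b
    obtain ⟨h1, h2⟩ := h ra rb hra hrb
    exact ⟨by rw [← hda, ← hdb, h1], by rw [← hθa, ← hθb, h2]⟩
end

section
/- Let W : ℕ → B be an infinite word and P K : ℝ with P ≥ 1 and 0 < K < 1 such that: (i) for all factors u₁, u₂ of W, if (u₂ : List B).length ≥ P · u₁.length then u₁ is a factor of u₂; and (ii) for every factor u of W and any two distinct starting positions i ≠ j of occurrences of u in W, |i − j| ≥ K · u.length. Let m : ℕ with m ≥ 1 and (1 + 3·P) / m < K. Then there do not exist N ≥ 1, finite words A and B' with A.length = B'.length = N, and finite words C₀, C₁, …, C_m with C₀.length < C₁.length < ⋯ < C_m.length and C_m.length ≤ N / m, such that A ++ Cᵢ ++ B' is a factor of W for every i ≤ m. -/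
lemma occursAt_append_parts {A : Type*} {x y : List A} {W : ℕ → A} {i : ℕ}
    (h : OccursAt (x ++ y) W i) : OccursAt x W i ∧ OccursAt y W (i + x.length) := by
  constructor
  · intro j hj
    have hj' : j < (x ++ y).length := by simp; omega
    have := h j hj'
    simp only [List.get_eq_getElem] at this ⊢
    rwa [List.getElem_append_left hj] at this
  · intro j hj
    have hj' : x.length + j < (x ++ y).length := by simp; omega
    have := h (x.length + j) hj'
    simp only [List.get_eq_getElem] at this ⊢
    rw [List.getElem_append_right (by omega)] at this
    simp only [Nat.add_sub_cancel_left] at this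
    rwa [← Nat.add_assoc] at this

lemma occursAt_of_infix {A : Type*} {u v : List A} {W : ℕ → A} {i : ℕ}
    (huv : u <:+: v) (h : OccursAt v W i) :
    ∃ k, OccursAt u W (i + k) ∧ k + u.length ≤ v.length := by
  obtain ⟨s, t, hst⟩ := huv
  refine ⟨s.length, ?_, ?_⟩
  · have hv : v = s ++ (u ++ t) := by rw [← hst]; simp
    rw [hv] at h
    exact (occursAt_append_parts (occursAt_append_parts h).2).1
  · have := congrArg List.length hst
    simp at this; omega

lemma chain_ge_aux (d : ℝ) (m : ℕ) (e : Fin (m + 1) → ℕ)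
    (hstep : ∀ k : ℕ, (hk : k + 1 ≤ m) → (e ⟨k, by omega⟩ : ℝ) + d ≤ (e ⟨k + 1, by omega⟩ : ℝ)) :
    ∀ k : ℕ, (hk : k ≤ m) → (e ⟨0, by omega⟩ : ℝ) + k * d ≤ (e ⟨k, by omega⟩ : ℝ) := by
  intro k
  induction k with
  | zero => intro _; simp
  | succ k ih =>
    intro hk
    have h1 := ih (by omega)
    have h2 := hstep k hk
    push_cast
    push_cast at h1 h2
    linarith

/-- the pigeonhole argument of the paper: no family
`A ++ Cᵢ ++ B'` of factors with slowly growing middles can exist. -/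
theorem no_family_of_close_factors {β : Type*} (W : ℕ → β) (P K : ℝ)
    (hP : 1 ≤ P) (hK0 : 0 < K) (hK1 : K < 1)
    (h1 : ∀ u₁ u₂ : List β, FactorOf u₁ W → FactorOf u₂ W →
      P * (u₁.length : ℝ) ≤ (u₂.length : ℝ) → u₁ <:+: u₂)
    (h2 : ∀ u : List β, ∀ i j : ℕ, OccursAt u W i → OccursAt u W j → i ≠ j →
      K * (u.length : ℝ) ≤ |(i : ℝ) - (j : ℝ)|)
    (m : ℕ) (hm : 1 ≤ m) (hmK : (1 + 3 * P) / (m : ℝ) < K) :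
    ¬ ∃ (N : ℕ) (Aw Bw : List β) (Cs : Fin (m + 1) → List β),
        1 ≤ N ∧ Aw.length = N ∧ Bw.length = N ∧
        StrictMono (fun i : Fin (m + 1) => (Cs i).length) ∧
        ((Cs (Fin.last m)).length : ℝ) ≤ (N : ℝ) / (m : ℝ) ∧
        (∀ i : Fin (m + 1), FactorOf (Aw ++ Cs i ++ Bw) W) := by
  rintro ⟨N, Aw, Bw, Cs, hN, hA, hB, hmono, hCm, hfac⟩
  have hNpos : (0:ℝ) < N := by exact_mod_cast hN
  have hNR : (1:ℝ) ≤ N := by exact_mod_cast hN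
  have hmpos : (0:ℝ) < m := by exact_mod_cast hm
  have hmR : (1:ℝ) ≤ m := by exact_mod_cast hm
  set c : Fin (m+1) → ℕ := fun i => (Cs i).length with hcdef
  set cm : ℕ := c (Fin.last m) with hcm
  have hcle : ∀ i, c i ≤ cm := fun i => hmono.monotone (Fin.le_last i)
  have hmK' : 1 + 3 * P < K * m := by
    rwa [div_lt_iff₀ hmpos] at hmK
  have hcmN : (cm : ℝ) * m ≤ N := by
    rw [← le_div_iff₀ hmpos]; exact hCm
  have hcm0 : (0:ℝ) ≤ (cm : ℝ) := Nat.cast_nonneg _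
  have hcmle : (cm : ℝ) ≤ N := by nlinarith
  set T : ℕ := ⌈P * (2 * N + cm)⌉₊ with hT
  have hTnn : (0:ℝ) ≤ P * (2 * N + cm) := by positivity
  have hTub : (T : ℝ) < P * (2 * N + cm) + 1 := Nat.ceil_lt_add_one hTnn
  set v : List β := (List.range T).map W with hv
  have hvlen : v.length = T := by simp [hv]
  have hvocc : OccursAt v W 0 := by
    intro j hj
    simp only [List.get_eq_getElem, hv, List.getElem_map, List.getElem_range]
    simp
  have hvfac : FactorOf v W := ⟨0, hvocc⟩
  have key : ∀ i : Fin (m+1), ∃ qi : ℕ,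
      OccursAt (Aw ++ Cs i ++ Bw) W qi ∧ qi + (2 * N + c i) ≤ T := by
    intro i
    have hlen : (Aw ++ Cs i ++ Bw).length = 2 * N + c i := by
      simp only [hcdef, List.length_append, hA, hB]; omega
    have hinf : (Aw ++ Cs i ++ Bw) <:+: v := by
      apply h1 _ _ (hfac i) hvfac
      rw [hlen, hvlen]
      have hci : (c i : ℝ) ≤ cm := by exact_mod_cast hcle i
      have h' : ((2 * N + c i : ℕ) : ℝ) ≤ 2 * N + cm := by push_cast; linarith
      calc P * ((2 * N + c i : ℕ) : ℝ)
          ≤ P * (2 * N + cm) := mul_le_mul_of_nonneg_left h' (by linarith)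
        _ ≤ T := Nat.le_ceil _
    obtain ⟨k, hocc, hkle⟩ := occursAt_of_infix hinf hvocc
    exact ⟨k, by simpa using hocc, by rw [hlen, hvlen] at hkle; omega⟩
  choose q hq1 hq2 using key
  have hAocc : ∀ i, OccursAt Aw W (q i) := by
    intro i
    have h := hq1 i
    rw [show Aw ++ Cs i ++ Bw = Aw ++ (Cs i ++ Bw) by simp] at h
    exact (occursAt_append_parts h).1
  have hBocc : ∀ i, OccursAt Bw W (q i + (N + c i)) := by
    intro i
    have h := (occursAt_append_parts (hq1 i)).2
    have hl : (Aw ++ Cs i).length = N + c i := by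
      simp only [hcdef, List.length_append, hA]
    rwa [hl] at h
  have hqinj : Function.Injective q := by
    intro i j hij
    by_contra hne
    have hcij : c i ≠ c j := fun h => hne (hmono.injective h)
    have hpos : q i + (N + c i) ≠ q j + (N + c j) := by rw [hij]; omega
    have hdist := h2 Bw _ _ (hBocc i) (hBocc j) hpos
    rw [hB, hij] at hdist
    have hciR : (c i : ℝ) ≤ cm := by exact_mod_cast hcle i
    have hcjR : (c j : ℝ) ≤ cm := by exact_mod_cast hcle j
    have hci0 : (0:ℝ) ≤ (c i : ℝ) := Nat.cast_nonneg _
    have hcj0 : (0:ℝ) ≤ (c j : ℝ) := Nat.cast_nonneg _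
    have habs : |((q j + (N + c i) : ℕ) : ℝ) - ((q j + (N + c j) : ℕ) : ℝ)| ≤ cm := by
      rw [abs_sub_le_iff]
      push_cast
      constructor <;> linarith
    have hKN : K * N ≤ cm := le_trans hdist habs
    nlinarith [hKN, hcmN, hmK', hNpos, hP]
  have hfar : ∀ i j : Fin (m+1), q i ≠ q j →
      K * N ≤ |((q i : ℕ) : ℝ) - ((q j : ℕ) : ℝ)| := by
    intro i j hne
    have h := h2 Aw _ _ (hAocc i) (hAocc j) hne
    rwa [hA] at h
  set S : Finset ℕ := Finset.image q Finset.univ with hS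
  have hcard : S.card = m + 1 := by
    rw [hS, Finset.card_image_of_injective _ hqinj, Finset.card_univ, Fintype.card_fin]
  set e : Fin (m+1) → ℕ := fun k => ((S.orderIsoOfFin hcard) k : ℕ) with he
  have hemem : ∀ k, e k ∈ S := fun k => ((S.orderIsoOfFin hcard) k).2
  have hemono : StrictMono e := by
    intro a b hab
    exact (S.orderIsoOfFin hcard).strictMono hab
  have hstep : ∀ k : ℕ, (hk : k + 1 ≤ m) →
      (e ⟨k, by omega⟩ : ℝ) + K * N ≤ (e ⟨k + 1, by omega⟩ : ℝ) := by
    intro k hk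
    have hlt : e ⟨k, by omega⟩ < e ⟨k+1, by omega⟩ :=
      hemono (Fin.mk_lt_mk.mpr (by omega))
    obtain ⟨i, -, hi⟩ := Finset.mem_image.mp (hemem ⟨k, by omega⟩)
    obtain ⟨j, -, hj⟩ := Finset.mem_image.mp (hemem ⟨k+1, by omega⟩)
    have hne : q i ≠ q j := by rw [hi, hj]; exact Nat.ne_of_lt hlt
    have hd := hfar i j hne
    rw [hi, hj, abs_sub_comm,
      abs_of_nonneg (sub_nonneg.mpr (Nat.cast_le.mpr hlt.le))] at hd
    linarith
  have hchain := chain_ge_aux (K * N) m e hstep m (le_refl m)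
  obtain ⟨i, -, hi⟩ := Finset.mem_image.mp (hemem ⟨m, by omega⟩)
  have hqT : (q i : ℝ) + 2 * N ≤ T := by
    have h := hq2 i
    have h' : q i + 2 * N ≤ T := by omega
    exact_mod_cast Nat.cast_le.mpr h'
  rw [hi] at hqT
  have h0 : (0:ℝ) ≤ (e ⟨0, by omega⟩ : ℕ) := Nat.cast_nonneg _
  have hPcm : P * cm ≤ P * N := mul_le_mul_of_nonneg_left hcmle (by linarith)
  have h13 : (1 + 3 * P) * N < K * m * N :=
    mul_lt_mul_of_pos_right hmK' hNpos
  linarith [hchain, hqT, hTub, h0, hPcm, h13, hNR]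
end

section
/- Let φ be a nonerasing substitution on a finite alphabet A, prolongable over a letter a₁, and suppose the set of φ-bounded factors of the fixed point φ^∞(a₁) is finite. Then for every φ-growing letter t occurring in φ^∞(a₁) there exists n : ℕ such that the word φ^n [t] contains at least two occurrences of φ-growing letters. -/
section Lemmas
variable {A : Type*} (φ : A → List A)

lemma getElem_middle (s v t : List A) {j : ℕ} (hj : j < v.length)
    {h : s.length + j < (s ++ v ++ t).length} : (s ++ v ++ t)[s.length + j] = v[j] := by
  have h1 : s.length + j < (s ++ v).length := by
    simp only [List.length_append]; omega
  rw [List.getElem_append_left h1, List.getElem_append_right (Nat.le_add_right _ _)]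
  simp

lemma applyMorph_append (u v : List A) :
    applyMorph φ (u ++ v) = applyMorph φ u ++ applyMorph φ v := by
  simp [applyMorph]

lemma iter_append (n : ℕ) (u v : List A) :
    (applyMorph φ)^[n] (u ++ v) = (applyMorph φ)^[n] u ++ (applyMorph φ)^[n] v := by
  induction n generalizing u v with
  | zero => simp
  | succ n ih => simp [Function.iterate_succ_apply, applyMorph_append, ih]

lemma iter_cons (n : ℕ) (a : A) (u : List A) :
    (applyMorph φ)^[n] (a :: u) = (applyMorph φ)^[n] [a] ++ (applyMorph φ)^[n] u := by
  simpa using iter_append φ n [a] u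

lemma length_le_applyMorph (hne : Nonerasing φ) (u : List A) :
    u.length ≤ (applyMorph φ u).length := by
  induction u with
  | nil => simp [applyMorph]
  | cons a u ih =>
      have h2 : applyMorph φ (a :: u) = φ a ++ applyMorph φ u := by simp [applyMorph]
      rw [h2, List.length_append, List.length_cons]
      have h1 : 1 ≤ (φ a).length := List.length_pos_iff.mpr (hne a)
      omega

lemma length_iter_mono (hne : Nonerasing φ) (u : List A) {k m : ℕ} (h : k ≤ m) :
    ((applyMorph φ)^[k] u).length ≤ ((applyMorph φ)^[m] u).length := by
  induction m with
  | zero => simp_all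
  | succ m ih =>
      rcases Nat.lt_or_ge k (m+1) with hk | hk
      · calc ((applyMorph φ)^[k] u).length
            ≤ ((applyMorph φ)^[m] u).length := ih (Nat.lt_succ_iff.mp hk)
          _ ≤ ((applyMorph φ)^[m+1] u).length := by
              rw [Function.iterate_succ_apply']
              exact length_le_applyMorph φ hne _
      · have : k = m + 1 := le_antisymm h hk
        subst this; exact le_rfl

lemma growing_iter (hne : Nonerasing φ) {t : A} (ht : GrowingLetter φ t) (n N : ℕ) :
    ∃ m : ℕ, N ≤ ((applyMorph φ)^[m] ((applyMorph φ)^[n] [t])).length := by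
  obtain ⟨k, hk⟩ := ht N
  refine ⟨k, ?_⟩
  rw [← Function.iterate_add_apply]
  calc N ≤ ((applyMorph φ)^[k] [t]).length := hk
    _ ≤ ((applyMorph φ)^[k+n] [t]).length := length_iter_mono φ hne _ (Nat.le_add_right _ _)

lemma nongrow_bounded {w : List A} (hw : ∀ a ∈ w, ¬ GrowingLetter φ a) :
    ∃ N, ∀ m, ((applyMorph φ)^[m] w).length < N := by
  induction w with
  | nil =>
      refine ⟨1, fun m => ?_⟩
      rw [Function.iterate_fixed (by simp [applyMorph])]
      simp
  | cons a u ih =>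
      have ha : ¬ GrowingLetter φ a := hw a (by simp)
      simp only [GrowingLetter, not_forall, not_exists, not_le] at ha
      obtain ⟨Na, hNa⟩ := ha
      obtain ⟨Nu, hNu⟩ := ih (fun b hb => hw b (by simp [hb]))
      refine ⟨Na + Nu, fun m => ?_⟩
      rw [iter_cons, List.length_append]
      have := hNa m
      have := hNu m
      omega

lemma phiBounded_of_bdd [Fintype A] {w : List A}
    (h : ∃ N, ∀ m, ((applyMorph φ)^[m] w).length < N) : PhiBounded φ w := by
  obtain ⟨N, hN⟩ := h
  have hfin : {l : List A | l.length < N}.Finite := List.finite_length_lt A N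
  have : Finite {l : List A // l.length < N} := hfin.to_subtype
  have key : ∀ i j : ℕ, i < j →
      (applyMorph φ)^[i] w = (applyMorph φ)^[j] w → PhiBounded φ w := by
    intro i j hlt heq
    refine ⟨i, j - i, by omega, fun m hm => ?_⟩
    have h1 : m + (j - i) = (m - i) + j := by omega
    have h2 : m = (m - i) + i := by omega
    rw [h1, Function.iterate_add_apply, ← heq, ← Function.iterate_add_apply, ← h2]
  obtain ⟨i, j, hij, heq⟩ := Finite.exists_ne_map_eq_of_infinite
    (fun m : ℕ => (⟨(applyMorph φ)^[m] w, hN m⟩ : {l : List A // l.length < N}))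
  have heq' : (applyMorph φ)^[i] w = (applyMorph φ)^[j] w := congrArg Subtype.val heq
  rcases Ne.lt_or_gt hij with h | h
  · exact key i j h heq'
  · exact key j i h heq'.symm

lemma factor_of_infix_prefix {X : ℕ → A} {v P : List A}
    (hinf : v <:+: P) (hP : PrefixOf P X) : FactorOf v X := by
  obtain ⟨s, t, hst⟩ := hinf
  refine ⟨s.length, fun j hj => ?_⟩
  have hlen : s.length + j < P.length := by
    rw [← hst]; simp only [List.length_append]; omega
  have hx := hP (s.length + j) hlen
  rw [Nat.zero_add] at hx
  rw [hx]
  simp only [List.get_eq_getElem]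
  subst hst
  exact getElem_middle s v t hj

lemma length_iter_a₁ {a₁ : A} (hpro : Prolongable φ a₁) (n : ℕ) :
    n + 1 ≤ ((applyMorph φ)^[n] [a₁]).length := by
  obtain ⟨v, hv, hvk⟩ := hpro
  induction n with
  | zero => simp
  | succ n ih =>
      have hdec : (applyMorph φ)^[n+1] [a₁]
          = (applyMorph φ)^[n] [a₁] ++ (applyMorph φ)^[n] v := by
        rw [Function.iterate_succ_apply]
        have h1 : applyMorph φ [a₁] = a₁ :: v := by simp [applyMorph, hv]
        rw [h1, iter_cons]
      rw [hdec, List.length_append]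
      have := List.length_pos_iff.mpr (hvk n)
      omega

lemma infix_of_factor {a₁ : A} {X : ℕ → A} (hX : IsFixedPoint φ a₁ X)
    (hpro : Prolongable φ a₁)
    {v : List A} (hv : FactorOf v X) : ∃ n, v <:+: (applyMorph φ)^[n] [a₁] := by
  obtain ⟨i, hi⟩ := hv
  suffices h : ∀ n, i + v.length ≤ ((applyMorph φ)^[n] [a₁]).length →
      v <:+: (applyMorph φ)^[n] [a₁] by
    refine ⟨i + v.length, h _ ?_⟩
    have := length_iter_a₁ φ hpro (i + v.length)
    omega
  intro n hlen
  have hveq : v = (((applyMorph φ)^[n] [a₁]).drop i).take v.length := by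
    apply List.ext_getElem
    · simp; omega
    · intro j hj hj'
      rw [List.getElem_take, List.getElem_drop]
      have h1 := hi j hj
      have hXP := hX n (i + j) (by omega)
      rw [Nat.zero_add] at hXP
      simp only [List.get_eq_getElem] at h1 hXP
      rw [← hXP, h1]
  rw [hveq]
  exact (List.take_prefix _ _).isInfix.trans (List.drop_suffix i _).isInfix

lemma factor_applyMorph {a₁ : A} {X : ℕ → A} (hX : IsFixedPoint φ a₁ X)
    (hpro : Prolongable φ a₁)
    {v : List A} (hv : FactorOf v X) : FactorOf (applyMorph φ v) X := by
  obtain ⟨n, s, t, hst⟩ := infix_of_factor φ hX hpro hv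
  apply factor_of_infix_prefix (v := applyMorph φ v) (P := (applyMorph φ)^[n+1] [a₁])
    ?_ (hX (n+1))
  refine ⟨applyMorph φ s, applyMorph φ t, ?_⟩
  rw [Function.iterate_succ_apply', ← hst]
  simp [applyMorph_append]

lemma factor_iter {a₁ : A} {X : ℕ → A} (hX : IsFixedPoint φ a₁ X)
    (hpro : Prolongable φ a₁)
    {v : List A} (hv : FactorOf v X) (n : ℕ) : FactorOf ((applyMorph φ)^[n] v) X := by
  induction n with
  | zero => simpa
  | succ n ih => rw [Function.iterate_succ_apply']; exact factor_applyMorph φ hX hpro ih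

lemma factor_of_infix_factor {X : ℕ → A} {u v : List A}
    (huv : u <:+: v) (hv : FactorOf v X) : FactorOf u X := by
  obtain ⟨s, t, hst⟩ := huv
  obtain ⟨i, hi⟩ := hv
  refine ⟨i + s.length, fun j hj => ?_⟩
  have hlen : s.length + j < v.length := by
    rw [← hst]; simp only [List.length_append]; omega
  have hx := hi (s.length + j) hlen
  rw [← Nat.add_assoc] at hx
  rw [hx]
  simp only [List.get_eq_getElem]
  subst hst
  exact getElem_middle s u t hj

end Lemmas

/-- if the set of `φ`-bounded factors is finite, every growing
letter occurring in the fixed point eventually produces two growing letters. -/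
theorem two_growing_letters_in_image {A : Type*} [Fintype A]
    (φ : A → List A) (a₁ : A) (hne : Nonerasing φ) (hpro : Prolongable φ a₁)
    (X : ℕ → A) (hX : IsFixedPoint φ a₁ X)
    (hfin : {w : List A | FactorOf w X ∧ PhiBounded φ w}.Finite) :
    ∀ t : A, GrowingLetter φ t → (∃ n : ℕ, X n = t) →
      ∃ (n : ℕ) (i j : Fin ((applyMorph φ)^[n] [t]).length),
        i ≠ j ∧
        GrowingLetter φ (((applyMorph φ)^[n] [t]).get i) ∧
        GrowingLetter φ (((applyMorph φ)^[n] [t]).get j) := by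
  intro t ht hocc
  obtain ⟨n₀, hn₀⟩ := hocc
  by_contra hcon
  push_neg at hcon
  obtain ⟨M, hM⟩ := (hfin.image List.length).bddAbove
  have hMw : ∀ w : List A, FactorOf w X → PhiBounded φ w → w.length ≤ M :=
    fun w h1 h2 => hM (Set.mem_image_of_mem _ ⟨h1, h2⟩)
  have hft : FactorOf [t] X := by
    refine ⟨n₀, fun j hj => ?_⟩
    have hj0 : j = 0 := by simpa using hj
    subst hj0
    simpa using hn₀
  have key : ∀ n : ℕ, ((applyMorph φ)^[n] [t]).length ≤ 2 * M + 1 := by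
    intro n
    set w := (applyMorph φ)^[n] [t] with hw
    have hex : ∃ i : Fin w.length, GrowingLetter φ (w.get i) := by
      by_contra hno
      push_neg at hno
      have hall : ∀ a ∈ w, ¬ GrowingLetter φ a := by
        intro a ha
        obtain ⟨i, hi⟩ := List.mem_iff_get.mp ha
        rw [← hi]; exact hno i
      obtain ⟨N, hN⟩ := nongrow_bounded φ hall
      obtain ⟨m, hm⟩ := growing_iter φ hne ht n N
      rw [← hw] at hm
      have := hN m
      omega
    obtain ⟨i, hi⟩ := hex
    have hwf : FactorOf w X := factor_iter φ hX hpro hft n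
    have hbng : ∀ a ∈ w.take i.val, ¬ GrowingLetter φ a := by
      intro a ha
      obtain ⟨⟨j, hj⟩, hg⟩ := List.mem_iff_get.mp ha
      have hj' : j < i.val := by
        simp only [List.length_take] at hj; omega
      have hjw : j < w.length := lt_trans hj' i.isLt
      have hng := hcon n i ⟨j, hjw⟩ (Fin.ne_of_val_ne (by simp only [Fin.val_mk]; omega)) hi
      rw [← hg]
      simpa [List.get_eq_getElem, List.getElem_take] using hng
    have hcng : ∀ a ∈ w.drop (i.val + 1), ¬ GrowingLetter φ a := by
      intro a ha
      obtain ⟨⟨j, hj⟩, hg⟩ := List.mem_iff_get.mp ha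
      have hj' : i.val + 1 + j < w.length := by
        simp only [List.length_drop] at hj; omega
      have hng := hcon n i ⟨i.val + 1 + j, hj'⟩ (Fin.ne_of_val_ne (by simp only [Fin.val_mk]; omega)) hi
      rw [← hg]
      simpa [List.get_eq_getElem, List.getElem_drop] using hng
    have hb : (w.take i.val).length ≤ M :=
      hMw _ (factor_of_infix_factor (List.take_prefix _ _).isInfix hwf)
        (phiBounded_of_bdd φ (nongrow_bounded φ hbng))
    have hc : (w.drop (i.val + 1)).length ≤ M :=
      hMw _ (factor_of_infix_factor (List.drop_suffix _ _).isInfix hwf)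
        (phiBounded_of_bdd φ (nongrow_bounded φ hcng))
    simp only [List.length_take, List.length_drop] at hb hc
    have := i.isLt
    omega
  obtain ⟨n, hn⟩ := ht (2 * M + 2)
  have := key n
  omega
end
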